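/- arXiv:1902.00693 — 9 statements merged into one kernel-verified Lean document; each statement's English description precedes it below -/
import Mathlib

section
/- Let Φ : X×Y → ℝ^m be a generating function, a, b ∈ ℝ^m with a ≤ b componentwise, and assume the uncertainty set U_Φ^{a,b} is nonempty. Let (α*, β*, γ*) be an optimal solution of problem (7), and let h* be a classification rule satisfying h*(x,y) ≥ Φ(x,y)ᵀ(α* − β*) + γ* for all (x,y) ∈ X×Y. Then h* is a minimax classification rule against U_Φ^{a,b}: for every classification rule h, sup_{p ∈ U_Φ^{a,b}} ℓ(h*, p) ≤ sup_{p ∈ U_Φ^{a,b}} ℓ(h, p). -/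
open Finset

/-- A probability distribution on `X × Y`. -/
def IsProb {X Y : Type*} [Fintype X] [Fintype Y] (p : X × Y → ℝ) : Prop :=
  (∀ z, 0 ≤ p z) ∧ ∑ z : X × Y, p z = 1

/-- A (probabilistic) classification rule on `X × Y`. -/
def IsRule {X Y : Type*} [Fintype X] [Fintype Y] (h : X × Y → ℝ) : Prop :=
  (∀ z, 0 ≤ h z) ∧ ∀ x : X, ∑ y : Y, h (x, y) = 1

/-- Expected 0-1 loss `ℓ(h, p) = 1 - ∑ p·h`. -/
def loss {X Y : Type*} [Fintype X] [Fintype Y] (h p : X × Y → ℝ) : ℝ :=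
  1 - ∑ z : X × Y, p z * h z

/-- Membership in the polyhedral uncertainty set `U_Φ^{a,b}`. -/
def InU {X Y : Type*} [Fintype X] [Fintype Y] {m : ℕ}
    (Φ : X × Y → Fin m → ℝ) (a b : Fin m → ℝ) (p : X × Y → ℝ) : Prop :=
  IsProb p ∧ ∀ i, a i ≤ (∑ z : X × Y, p z * Φ z i) ∧ (∑ z : X × Y, p z * Φ z i) ≤ b i

/-- Feasibility for problem (7). -/
def Feas7 {X Y : Type*} [Fintype X] [Fintype Y] [Nonempty X] [Nonempty Y] {m : ℕ}
    (Φ : X × Y → Fin m → ℝ) (α β : Fin m → ℝ) (γ : ℝ) : Prop :=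
  (∀ i, 0 ≤ α i) ∧ (∀ i, 0 ≤ β i) ∧
    (Finset.univ.sup' Finset.univ_nonempty fun x : X =>
      ∑ y : Y, max (∑ i, Φ (x, y) i * (α i - β i) + γ) 0) ≤ 1

/-- Optimality for problem (7) with data `a, b`. -/
def Opt7 {X Y : Type*} [Fintype X] [Fintype Y] [Nonempty X] [Nonempty Y] {m : ℕ}
    (Φ : X × Y → Fin m → ℝ) (a b : Fin m → ℝ) (α β : Fin m → ℝ) (γ : ℝ) : Prop :=
  Feas7 Φ α β γ ∧ ∀ α' β' : Fin m → ℝ, ∀ γ' : ℝ, Feas7 Φ α' β' γ' →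
    (∑ i, a i * α' i) - (∑ i, b i * β' i) + γ' ≤ (∑ i, a i * α i) - (∑ i, b i * β i) + γ

/-- Key strong-duality step: for any rule `h` there is `p ∈ U` with `⟨h,p⟩ ≤ v*`. -/
lemma exists_low {X Y : Type*} [Fintype X] [Fintype Y] [Nonempty X] [Nonempty Y]
    {m : ℕ} (Φ : X × Y → Fin m → ℝ) (a b : Fin m → ℝ) (hab : ∀ i, a i ≤ b i)
    (hU : ∃ p, InU Φ a b p)
    (α β : Fin m → ℝ) (γ : ℝ) (hopt : Opt7 Φ a b α β γ)
    (h : X × Y → ℝ) (hrule : IsRule h) :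
    ∃ p, InU Φ a b p ∧
      ∑ z : X × Y, p z * h z ≤ (∑ i, a i * α i) - (∑ i, b i * β i) + γ := by
  classical
  set v : ℝ := (∑ i, a i * α i) - (∑ i, b i * β i) + γ with hv
  by_contra hcon
  push_neg at hcon
  -- the linear map p ↦ (Φᵀp, ⟨h,p⟩)
  let T : ((X × Y) → ℝ) →ₗ[ℝ] ((Fin m → ℝ) × ℝ) :=
    { toFun := fun p => (fun i => ∑ z : X × Y, p z * Φ z i, ∑ z : X × Y, p z * h z)
      map_add' := by
        intro p q
        refine Prod.ext ?_ ?_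
        · funext i
          simp [add_mul, Finset.sum_add_distrib]
        · simp [add_mul, Finset.sum_add_distrib]
      map_smul' := by
        intro c p
        refine Prod.ext ?_ ?_
        · funext i
          simp [Finset.mul_sum, mul_assoc]
        · simp [Finset.mul_sum, mul_assoc] }
  have hTc : Continuous T := T.continuous_of_finiteDimensional
  set C : Set ((Fin m → ℝ) × ℝ) := T '' stdSimplex ℝ (X × Y) with hC
  set D : Set ((Fin m → ℝ) × ℝ) :=
    (Set.univ.pi fun i => Set.Icc (a i) (b i)) ×ˢ Set.Iic v with hD
  have hCconv : Convex ℝ C := (convex_stdSimplex ℝ _).linear_image T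
  have hCcomp : IsCompact C := (isCompact_stdSimplex ℝ _).image hTc
  have hDconv : Convex ℝ D :=
    (convex_pi fun i _ => convex_Icc (a i) (b i)).prod (convex_Iic v)
  have hDclosed : IsClosed D :=
    (isClosed_set_pi fun i _ => isClosed_Icc).prod isClosed_Iic
  have disj : Disjoint C D := by
    rw [Set.disjoint_left]
    rintro ⟨q, r⟩ ⟨p, hp, hpq⟩ hd
    have hq : q = fun i => ∑ z : X × Y, p z * Φ z i := by
      have := congrArg Prod.fst hpq; simpa [T] using this.symm
    have hr : r = ∑ z : X × Y, p z * h z := by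
      have := congrArg Prod.snd hpq; simpa [T] using this.symm
    obtain ⟨hd1, hd2⟩ := hd
    have hpU : InU Φ a b p := by
      refine ⟨⟨hp.1, hp.2⟩, fun i => ?_⟩
      have := hd1 i (Set.mem_univ i)
      rw [hq] at this
      exact ⟨this.1, this.2⟩
    have := hcon p hpU
    rw [← hr] at this
    have : v < r := this
    exact absurd hd2 (not_le.mpr this)
  obtain ⟨f, u, v', hfC, huv, hfD⟩ :=
    geometric_hahn_banach_compact_closed hCconv hCcomp hDconv hDclosed disj
  set w : Fin m → ℝ := fun i => f ((Pi.single i 1 : Fin m → ℝ), (0 : ℝ)) with hw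
  set t0 : ℝ := f ((0 : Fin m → ℝ), (1 : ℝ)) with ht0def
  have key : ∀ (q : Fin m → ℝ) (r : ℝ),
      f (q, r) = (∑ i, q i * w i) + r * t0 := by
    intro q r
    have hsplit : ((q, r) : (Fin m → ℝ) × ℝ)
        = (∑ i, q i • ((Pi.single i (1:ℝ) : Fin m → ℝ), (0:ℝ)))
          + r • ((0 : Fin m → ℝ), (1 : ℝ)) := by
      rw [Prod.ext_iff]
      constructor
      · simp only [Prod.fst_add, Prod.fst_sum, Prod.smul_mk, Prod.smul_fst]
        funext j
        simp [Pi.single_apply, Finset.sum_apply, Finset.sum_ite_eq]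
      · simp only [Prod.snd_add, Prod.snd_sum, Prod.smul_mk, Prod.smul_snd]
        simp
    rw [hsplit, map_add, map_sum]
    simp only [map_smul, smul_eq_mul]
    rfl
  have hq0mem : ∀ q : Fin m → ℝ, (∀ i, a i ≤ q i ∧ q i ≤ b i) → ∀ r ≤ v, (q, r) ∈ D := by
    intro q hq r hr
    exact ⟨fun i _ => ⟨(hq i).1, (hq i).2⟩, hr⟩
  -- evaluate f on vertices of the simplex
  have hz : ∀ z : X × Y, (∑ i, Φ z i * w i) + h z * t0 < u := by
    intro z
    have hmem : (Pi.single z (1:ℝ) : X × Y → ℝ) ∈ stdSimplex ℝ (X × Y) :=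
      single_mem_stdSimplex ℝ z
    have hTz : T (Pi.single z (1:ℝ)) = (fun i => Φ z i, h z) := by
      rw [Prod.ext_iff]
      constructor
      · funext i
        simp [T, Pi.single_apply, ite_mul, Finset.sum_ite_eq, Finset.sum_ite_eq']
      · simp [T, Pi.single_apply, ite_mul, Finset.sum_ite_eq, Finset.sum_ite_eq']
    have := hfC _ ⟨_, hmem, rfl⟩
    rw [hTz, key] at this
    exact this
  have ht0 : t0 < 0 := by
    rcases lt_trichotomy t0 0 with h1 | h1 | h1
    · exact h1
    · exfalso
      obtain ⟨p₀, hp₀⟩ := hU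
      have hmem : p₀ ∈ stdSimplex ℝ (X × Y) := ⟨hp₀.1.1, hp₀.1.2⟩
      have hfc := hfC _ ⟨p₀, hmem, rfl⟩
      have hfd := hfD ((fun i => ∑ z : X × Y, p₀ z * Φ z i), v)
        (hq0mem _ (fun i => hp₀.2 i) v le_rfl)
      rw [key] at hfd
      have : f (T p₀) = (∑ i, (∑ z : X × Y, p₀ z * Φ z i) * w i)
          + (∑ z : X × Y, p₀ z * h z) * t0 := key _ _
      rw [this, h1] at hfc
      rw [h1] at hfd
      simp at hfc hfd
      linarith
    · exfalso
      set s : ℝ := max 0 (((∑ i, a i * w i) + v * t0 - v') / t0) with hs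
      have hs0 : 0 ≤ s := le_max_left _ _
      have hs1 : ((∑ i, a i * w i) + v * t0 - v') / t0 ≤ s := le_max_right _ _
      have hs2 : (∑ i, a i * w i) + v * t0 - v' ≤ s * t0 := by
        rw [div_le_iff₀ h1] at hs1; linarith
      have hfd := hfD (a, v - s) (hq0mem a (fun i => ⟨le_rfl, hab i⟩) _ (by linarith))
      rw [key] at hfd
      nlinarith
  set τ : ℝ := -t0 with hτdef
  have hτ : 0 < τ := by simp [hτdef]; linarith
  set α' : Fin m → ℝ := fun i => max (w i) 0 / τ with hα'
  set β' : Fin m → ℝ := fun i => max (-w i) 0 / τ with hβ'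
  set γ' : ℝ := -u / τ with hγ'
  have hdiff : ∀ i, α' i - β' i = w i / τ := by
    intro i
    rw [hα', hβ', div_sub_div_same, max_zero_sub_max_neg_zero_eq_self]
  have hSz : ∀ z : X × Y, ∑ i, Φ z i * (α' i - β' i) + γ' < h z := by
    intro z
    have h1 : ∑ i, Φ z i * (α' i - β' i) + γ' = ((∑ i, Φ z i * w i) - u) / τ := by
      have e : ∀ i ∈ Finset.univ, Φ z i * (α' i - β' i) = Φ z i * w i / τ :=
        fun i _ => by rw [hdiff i, mul_div_assoc]
      rw [Finset.sum_congr rfl e, ← Finset.sum_div, hγ']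
      ring
    rw [h1, div_lt_iff₀ hτ]
    have h2 := hz z
    have h3 : h z * τ = -(h z * t0) := by rw [hτdef]; ring
    linarith
  have hfeas : Feas7 Φ α' β' γ' := by
    refine ⟨fun i => div_nonneg (le_max_right _ _) hτ.le,
      fun i => div_nonneg (le_max_right _ _) hτ.le, ?_⟩
    apply Finset.sup'_le
    intro x _
    calc ∑ y : Y, max (∑ i, Φ (x, y) i * (α' i - β' i) + γ') 0
        ≤ ∑ y : Y, h (x, y) := by
          apply Finset.sum_le_sum
          intro y _
          exact max_le (hSz (x, y)).le (hrule.1 (x, y))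
      _ = 1 := hrule.2 x
  -- the dual objective at (α', β', γ') exceeds v
  set q₀ : Fin m → ℝ := fun i => if 0 ≤ w i then a i else b i with hq₀
  have hq₀mem : ∀ i, a i ≤ q₀ i ∧ q₀ i ≤ b i := by
    intro i
    rw [hq₀]
    by_cases hwi : 0 ≤ w i <;> simp [hwi, hab i]
  have hfd := hfD (q₀, v) (hq0mem q₀ hq₀mem v le_rfl)
  rw [key] at hfd
  have hsum : ∑ i, q₀ i * w i
      = ∑ i, (a i * max (w i) 0 - b i * max (-w i) 0) := by
    apply Finset.sum_congr rfl
    intro i _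
    rw [hq₀]
    by_cases hwi : 0 ≤ w i
    · simp [hwi, max_eq_left hwi, max_eq_right (neg_nonpos.mpr hwi)]
    · push_neg at hwi
      simp only [not_le.mpr hwi, if_false, max_eq_right hwi.le,
        max_eq_left (neg_nonneg.mpr hwi.le)]
      ring
  have hobj : ((∑ i, a i * α' i) - (∑ i, b i * β' i) + γ') * τ
      = (∑ i, q₀ i * w i) - u := by
    rw [hsum, add_mul, sub_mul, Finset.sum_sub_distrib]
    have e1 : (∑ i, a i * α' i) * τ = ∑ i, a i * max (w i) 0 := by
      rw [Finset.sum_mul]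
      refine Finset.sum_congr rfl fun i _ => ?_
      simp only [hα']
      field_simp
    have e2 : (∑ i, b i * β' i) * τ = ∑ i, b i * max (-w i) 0 := by
      rw [Finset.sum_mul]
      refine Finset.sum_congr rfl fun i _ => ?_
      simp only [hβ']
      field_simp
    have e3 : γ' * τ = -u := by
      rw [hγ', div_mul_cancel₀ _ hτ.ne']
    rw [e1, e2, e3]
    ring
  have hle := hopt.2 α' β' γ' hfeas
  have hle2 : ((∑ i, a i * α' i) - (∑ i, b i * β' i) + γ') * τ ≤ v * τ :=
    mul_le_mul_of_nonneg_right hle hτ.le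
  rw [hobj] at hle2
  -- hfd : v' < ∑ q₀ w + v * t0, t0 = -τ, u < v'
  have : v * t0 = -(v * τ) := by rw [hτdef]; ring
  nlinarith

/-- a rule dominating `Φᵀ(α*-β*) + γ*` for an optimal solution of (7)
is minimax against `U_Φ^{a,b}`. -/
theorem lpc_minimax_rule {X Y : Type*} [Fintype X] [Fintype Y] [Nonempty X] [Nonempty Y]
    {m : ℕ} (Φ : X × Y → Fin m → ℝ) (a b : Fin m → ℝ) (hab : ∀ i, a i ≤ b i)
    (hU : ∃ p, InU Φ a b p)
    (α β : Fin m → ℝ) (γ : ℝ) (hopt : Opt7 Φ a b α β γ)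
    (hstar : X × Y → ℝ) (hrule : IsRule hstar)
    (hge : ∀ z : X × Y, ∑ i, Φ z i * (α i - β i) + γ ≤ hstar z) :
    ∀ h : X × Y → ℝ, IsRule h →
      sSup {r | ∃ p, InU Φ a b p ∧ r = loss hstar p} ≤
        sSup {r | ∃ p, InU Φ a b p ∧ r = loss h p} := by
  intro h hruleh
  obtain ⟨p₀, hp₀U, hp₀le⟩ := exists_low Φ a b hab hU α β γ hopt h hruleh
  set v : ℝ := (∑ i, a i * α i) - (∑ i, b i * β i) + γ with hv
  -- weak duality: for every p ∈ U, v ≤ ⟨hstar, p⟩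
  have hweak : ∀ p, InU Φ a b p → v ≤ ∑ z : X × Y, p z * hstar z := by
    intro p hpU
    have step1 : ∑ z : X × Y, p z * (∑ i, Φ z i * (α i - β i) + γ)
        ≤ ∑ z : X × Y, p z * hstar z :=
      Finset.sum_le_sum fun z _ => mul_le_mul_of_nonneg_left (hge z) (hpU.1.1 z)
    have step2 : ∑ z : X × Y, p z * (∑ i, Φ z i * (α i - β i) + γ)
        = (∑ i, (α i - β i) * (∑ z : X × Y, p z * Φ z i)) + γ := by
      simp only [mul_add, Finset.sum_add_distrib, Finset.mul_sum]
      congr 1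
      · rw [Finset.sum_comm]
        refine Finset.sum_congr rfl fun i _ => ?_
        exact Finset.sum_congr rfl fun z _ => by ring
      · rw [← Finset.sum_mul, hpU.1.2, one_mul]
    have step3 : ∑ i, (a i * α i - b i * β i)
        ≤ ∑ i, (α i - β i) * (∑ z : X × Y, p z * Φ z i) := by
      apply Finset.sum_le_sum
      intro i _
      have h1 := (hpU.2 i).1
      have h2 := (hpU.2 i).2
      have hα := hopt.1.1 i
      have hβ := hopt.1.2.1 i
      nlinarith [mul_le_mul_of_nonneg_left h1 hα, mul_le_mul_of_nonneg_left h2 hβ]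
    have step4 : (∑ i, a i * α i) - (∑ i, b i * β i) = ∑ i, (a i * α i - b i * β i) :=
      (Finset.sum_sub_distrib _ _).symm
    rw [step2] at step1
    rw [hv]
    linarith
  -- every rule is pointwise ≤ 1, so ⟨rule, p⟩ ≤ 1 for p ∈ U
  have hrle1 : ∀ (g : X × Y → ℝ), IsRule g → ∀ p, InU Φ a b p →
      ∑ z : X × Y, p z * g z ≤ 1 := by
    intro g hg p hpU
    calc ∑ z : X × Y, p z * g z ≤ ∑ z : X × Y, p z := by
          apply Finset.sum_le_sum
          intro z _
          have hz1 : g z ≤ 1 := by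
            obtain ⟨x, y⟩ := z
            have := Finset.single_le_sum (f := fun y' => g (x, y'))
              (fun y' _ => hg.1 (x, y')) (Finset.mem_univ y)
            rw [hg.2 x] at this
            exact this
          calc p z * g z ≤ p z * 1 := mul_le_mul_of_nonneg_left hz1 (hpU.1.1 z)
            _ = p z := mul_one _
      _ = 1 := hpU.1.2
  have h0 : 0 ≤ 1 - v := by
    have := hweak p₀ hp₀U
    have := hrle1 hstar hrule p₀ hp₀U
    linarith
  have h1' : sSup {r | ∃ p, InU Φ a b p ∧ r = loss hstar p} ≤ 1 - v := by
    apply Real.sSup_le _ h0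
    rintro r ⟨p, hpU, rfl⟩
    have := hweak p hpU
    simp only [loss]
    linarith
  have hbdd : BddAbove {r | ∃ p, InU Φ a b p ∧ r = loss h p} := by
    refine ⟨1, ?_⟩
    rintro r ⟨p, hpU, rfl⟩
    have : 0 ≤ ∑ z : X × Y, p z * h z :=
      Finset.sum_nonneg fun z _ => mul_nonneg (hpU.1.1 z) (hruleh.1 z)
    simp only [loss]
    linarith
  have h3' : loss h p₀ ≤ sSup {r | ∃ p, InU Φ a b p ∧ r = loss h p} :=
    le_csSup hbdd ⟨p₀, hp₀U, rfl⟩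
  have h2' : 1 - v ≤ loss h p₀ := by
    simp only [loss]
    linarith
  linarith
end

section
/- Let Φ : X×Y → ℝ^m be a generating function, a, b ∈ ℝ^m with a ≤ b componentwise, and assume the uncertainty set U_Φ^{a,b} is nonempty. If (α*, β*, γ*) is an optimal solution of problem (7), then the minimax expected loss satisfies R_Φ^{a,b} = inf over classification rules h of sup over p ∈ U_Φ^{a,b} of ℓ(h,p) = 1 − aᵀα* + bᵀβ* − γ*. -/
open Finset

-- Lemma A: weak-duality style bound
lemma lemA {X Y : Type*} [Fintype X] [Fintype Y] {m : ℕ}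
    (Φ : X × Y → Fin m → ℝ) (a b : Fin m → ℝ)
    (α β : Fin m → ℝ) (γ : ℝ) (hα : ∀ i, 0 ≤ α i) (hβ : ∀ i, 0 ≤ β i)
    (p : X × Y → ℝ) (hp : InU Φ a b p) (k : X × Y → ℝ)
    (hk : ∀ z, ∑ i, Φ z i * (α i - β i) + γ ≤ k z) :
    (∑ i, a i * α i) - (∑ i, b i * β i) + γ ≤ ∑ z : X × Y, p z * k z := by
  obtain ⟨⟨hp0, hp1⟩, hpi⟩ := hp
  have key : (∑ i, a i * α i) - (∑ i, b i * β i) + γ ≤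
      ∑ z : X × Y, p z * (∑ i, Φ z i * (α i - β i) + γ) := by
    have e : ∑ z : X × Y, p z * (∑ i, Φ z i * (α i - β i) + γ)
        = (∑ i, (∑ z : X × Y, p z * Φ z i) * (α i - β i)) + γ := by
      have e1 : ∑ z : X × Y, p z * (∑ i, Φ z i * (α i - β i) + γ)
          = (∑ z : X × Y, ∑ i, p z * Φ z i * (α i - β i)) + (∑ z : X × Y, p z) * γ := by
        rw [Finset.sum_mul, ← Finset.sum_add_distrib]
        refine Finset.sum_congr rfl fun z _ => ?_
        rw [mul_add, Finset.mul_sum]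
        congr 1
        exact Finset.sum_congr rfl fun i _ => (mul_assoc _ _ _).symm
      rw [e1, hp1, one_mul, Finset.sum_comm]
      congr 1
      refine Finset.sum_congr rfl fun i _ => ?_
      rw [Finset.sum_mul]
    rw [e]
    have : ∀ i ∈ Finset.univ, a i * α i - b i * β i ≤
        (∑ z : X × Y, p z * Φ z i) * (α i - β i) := by
      intro i _
      have h1 : a i * α i ≤ (∑ z : X × Y, p z * Φ z i) * α i :=
        mul_le_mul_of_nonneg_right (hpi i).1 (hα i)
      have h2 : (∑ z : X × Y, p z * Φ z i) * β i ≤ b i * β i :=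
        mul_le_mul_of_nonneg_right (hpi i).2 (hβ i)
      nlinarith
    have := Finset.sum_le_sum this
    simp only [Finset.sum_sub_distrib] at this
    linarith
  refine key.trans (Finset.sum_le_sum fun z _ => ?_)
  exact mul_le_mul_of_nonneg_left (hk z) (hp0 z)

-- Lemma B : from a feasible dual point, build a rule dominating the dual slack
lemma lemB {X Y : Type*} [Fintype X] [Fintype Y] [Nonempty X] [Nonempty Y] {m : ℕ}
    (Φ : X × Y → Fin m → ℝ) (α β : Fin m → ℝ) (γ : ℝ) (hf : Feas7 Φ α β γ) :
    ∃ k : X × Y → ℝ, IsRule k ∧ ∀ z, ∑ i, Φ z i * (α i - β i) + γ ≤ k z := by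
  classical
  set g : X × Y → ℝ := fun z => max (∑ i, Φ z i * (α i - β i) + γ) 0 with hg
  have hcard : (0 : ℝ) < Fintype.card Y := by
    exact_mod_cast Fintype.card_pos
  have hSx : ∀ x : X, ∑ y : Y, g (x, y) ≤ 1 := by
    intro x
    refine le_trans ?_ hf.2.2
    exact Finset.le_sup' (fun x : X =>
      ∑ y : Y, max (∑ i, Φ (x, y) i * (α i - β i) + γ) 0) (Finset.mem_univ x)
  refine ⟨fun z => g z + (1 - ∑ y : Y, g (z.1, y)) / Fintype.card Y, ⟨?_, ?_⟩, ?_⟩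
  · intro z
    have h1 : 0 ≤ g z := le_max_right _ _
    have h2 : 0 ≤ (1 - ∑ y : Y, g (z.1, y)) / Fintype.card Y :=
      div_nonneg (by linarith [hSx z.1]) hcard.le
    linarith
  · intro x
    simp only
    rw [Finset.sum_add_distrib, Finset.sum_const, Finset.card_univ, nsmul_eq_mul]
    field_simp
    ring
  · intro z
    have h2 : 0 ≤ (1 - ∑ y : Y, g (z.1, y)) / Fintype.card Y :=
      div_nonneg (by linarith [hSx z.1]) hcard.le
    have h1 : ∑ i, Φ z i * (α i - β i) + γ ≤ g z := le_max_left _ _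
    linarith

-- Lemma C : hard direction; every rule admits p ∈ U with small expected accuracy
lemma lemC {X Y : Type*} [Fintype X] [Fintype Y] [Nonempty X] [Nonempty Y] {m : ℕ}
    (Φ : X × Y → Fin m → ℝ) (a b : Fin m → ℝ) (hab : ∀ i, a i ≤ b i)
    (hU : ∃ p, InU Φ a b p)
    (α β : Fin m → ℝ) (γ : ℝ)
    (hopt : Feas7 Φ α β γ ∧ ∀ α' β' : Fin m → ℝ, ∀ γ' : ℝ, Feas7 Φ α' β' γ' →
      (∑ i, a i * α' i) - (∑ i, b i * β' i) + γ' ≤ (∑ i, a i * α i) - (∑ i, b i * β i) + γ)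
    (h : X × Y → ℝ) (hrule : IsRule h) :
    ∃ p, InU Φ a b p ∧
      ∑ z : X × Y, p z * h z ≤ (∑ i, a i * α i) - (∑ i, b i * β i) + γ := by
  classical
  set V : ℝ := (∑ i, a i * α i) - (∑ i, b i * β i) + γ with hV
  -- the uncertainty set as a set, compact and nonempty
  set U : Set (X × Y → ℝ) := {p | InU Φ a b p} with hUdef
  have hcont : ∀ k : X × Y → ℝ, Continuous fun p : X × Y → ℝ => ∑ z : X × Y, p z * k z := by
    intro k
    exact continuous_finset_sum _ fun z _ => (continuous_apply z).mul continuous_const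
  have hUsub : U ⊆ stdSimplex ℝ (X × Y) := fun p hp => hp.1
  have hUclosed : IsClosed U := by
    have : U = stdSimplex ℝ (X × Y) ∩
        ⋂ i : Fin m, ({p | a i ≤ ∑ z : X × Y, p z * Φ z i} ∩
          {p | ∑ z : X × Y, p z * Φ z i ≤ b i}) := by
      ext p
      simp only [Set.mem_inter_iff, Set.mem_iInter, Set.mem_setOf_eq, hUdef]
      exact ⟨fun hp => ⟨hp.1, hp.2⟩, fun hp => ⟨hp.1, hp.2⟩⟩
    rw [this]
    refine (isClosed_stdSimplex _ _).inter (isClosed_iInter fun i => ?_)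
    exact (isClosed_le continuous_const (hcont _)).inter (isClosed_le (hcont _) continuous_const)
  have hUcomp : IsCompact U := (isCompact_stdSimplex _ _).of_isClosed_subset hUclosed hUsub
  obtain ⟨p₀, hp₀⟩ := hU
  obtain ⟨pm, hpmU, hpmmin⟩ := hUcomp.exists_isMinOn ⟨p₀, hp₀⟩ ((hcont h).continuousOn)
  set c : ℝ := ∑ z : X × Y, pm z * h z with hc
  by_cases hcV : c ≤ V
  · exact ⟨pm, hpmU, hcV⟩
  push_neg at hcV
  exfalso
  set ε : ℝ := (c - V) / 2 with hε
  have hε0 : 0 < ε := by simp [hε]; linarith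
  -- the linear image of the simplex and the obstacle set
  set L : (X × Y → ℝ) → (Fin m → ℝ) × ℝ :=
    fun p => (fun i => ∑ z : X × Y, p z * Φ z i, ∑ z : X × Y, p z * h z) with hL
  have hLlin : IsLinearMap ℝ L := by
    constructor
    · intro p q
      simp only [hL, Prod.mk_add_mk, Prod.mk.injEq]
      constructor
      · funext i
        simp [add_mul, Finset.sum_add_distrib]
      · simp [add_mul, Finset.sum_add_distrib]
    · intro r p
      simp only [hL, Prod.smul_mk, Prod.mk.injEq]
      constructor
      · funext i
        simp [Finset.mul_sum, mul_assoc]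
      · simp [Finset.mul_sum, mul_assoc]
  set D : Set ((Fin m → ℝ) × ℝ) := L '' stdSimplex ℝ (X × Y) with hD
  set B : Set ((Fin m → ℝ) × ℝ) := Set.Icc a b ×ˢ Set.Iic (c - ε) with hB
  have hDconv : Convex ℝ D := (convex_stdSimplex ℝ _).is_linear_image hLlin
  have hDcomp : IsCompact D := (isCompact_stdSimplex _ _).image
    (hLlin.mk' L).continuous_of_finiteDimensional
  have hBconv : Convex ℝ B := (convex_Icc a b).prod (convex_Iic _)
  have hBclosed : IsClosed B := isClosed_Icc.prod isClosed_Iic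
  have hdisj : Disjoint D B := by
    rw [Set.disjoint_left]
    rintro x ⟨p, hp, rfl⟩ hxB
    have hpU : p ∈ U := by
      refine ⟨hp, fun i => ?_⟩
      have h1 := hxB.1
      rw [Set.mem_Icc] at h1
      exact ⟨h1.1 i, h1.2 i⟩
    have h2 : ∑ z : X × Y, p z * h z ≤ c - ε := hxB.2
    have h3 : c ≤ ∑ z : X × Y, p z * h z := hpmmin hpU
    linarith
  obtain ⟨f, u, v, hfu, huv, hfv⟩ :=
    geometric_hahn_banach_compact_closed hDconv hDcomp hBconv hBclosed hdisj
  -- decompose the separating functional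
  set w : Fin m → ℝ := fun i => f ((Pi.single i 1 : Fin m → ℝ), (0 : ℝ)) with hw
  set d : ℝ := f ((0 : Fin m → ℝ), (1 : ℝ)) with hd
  have hfdec : ∀ x : (Fin m → ℝ) × ℝ, f x = (∑ i, x.1 i * w i) + x.2 * d := by
    intro x
    have h1 : x = (∑ i, x.1 i • ((Pi.single i 1 : Fin m → ℝ), (0 : ℝ)))
        + x.2 • ((0 : Fin m → ℝ), (1 : ℝ)) := by
      refine Prod.ext ?_ ?_
      · rw [Prod.fst_add, Prod.fst_sum]
        simp only [Prod.smul_mk, Prod.fst]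
        rw [Prod.fst]
        have : ∀ i : Fin m, x.1 i • (Pi.single i 1 : Fin m → ℝ) = Pi.single i (x.1 i) := by
          intro i
          ext j
          simp [Pi.single_apply, mul_ite]
        simp only [this, Finset.univ_sum_single]
        simp
      · rw [Prod.snd_add, Prod.snd_sum]
        simp [Prod.smul_mk]
    conv_lhs => rw [h1]
    rw [map_add, map_sum, map_smul]
    simp only [map_smul, smul_eq_mul]
    rfl
  have haIcc : a ∈ Set.Icc a b := Set.mem_Icc.2 ⟨le_refl a, fun i => hab i⟩
  -- the coefficient of the loss coordinate is negative
  have hd0 : d < 0 := by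
    rcases lt_trichotomy d 0 with hh | hh | hh
    · exact hh
    · exfalso
      have h1 : L p₀ ∈ D := ⟨p₀, hp₀.1, rfl⟩
      have h2 : (((L p₀).1, c - ε) : (Fin m → ℝ) × ℝ) ∈ B := by
        exact ⟨Set.mem_Icc.2 ⟨fun i => (hp₀.2 i).1, fun i => (hp₀.2 i).2⟩,
          Set.mem_Iic.2 le_rfl⟩
      have h3 := hfu _ h1
      have h4 := hfv _ h2
      rw [hfdec] at h3 h4
      simp only [hh, mul_zero, add_zero] at h3 h4
      linarith
    · exfalso
      set s₁ : ℝ := min (c - ε) ((v - ∑ i, a i * w i) / d - 1) with hs₁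
      have h2 : ((a, s₁) : (Fin m → ℝ) × ℝ) ∈ B :=
        ⟨haIcc, Set.mem_Iic.2 (min_le_left _ _)⟩
      have h4 := hfv _ h2
      rw [hfdec] at h4
      simp only at h4
      have h5 : s₁ ≤ (v - ∑ i, a i * w i) / d - 1 := min_le_right _ _
      have h6 : s₁ * d ≤ ((v - ∑ i, a i * w i) / d - 1) * d :=
        mul_le_mul_of_nonneg_right h5 hh.le
      rw [sub_mul, div_mul_cancel₀ _ (ne_of_gt hh)] at h6
      linarith
  have hdne : d ≠ 0 := ne_of_lt hd0
  -- build the contradicting dual point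
  set vv : Fin m → ℝ := fun i => -w i / d with hvv
  set γ' : ℝ := u / d with hγ'
  set α' : Fin m → ℝ := fun i => max (vv i) 0 with hα'
  set β' : Fin m → ℝ := fun i => max (-vv i) 0 with hβ'
  have hαβ : ∀ i, α' i - β' i = vv i := by
    intro i
    rcases le_total 0 (vv i) with hh | hh
    · rw [hα', hβ']
      simp only
      rw [max_eq_left hh, max_eq_right (by linarith : -vv i ≤ 0)]
      ring
    · rw [hα', hβ']
      simp only
      rw [max_eq_right hh, max_eq_left (by linarith : 0 ≤ -vv i)]
      ring
  have hdom : ∀ z : X × Y, ∑ i, Φ z i * (α' i - β' i) + γ' < h z := by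
    intro z
    have h1 : L (Pi.single z 1) ∈ D := ⟨_, single_mem_stdSimplex ℝ z, rfl⟩
    have h3 := hfu _ h1
    rw [hfdec] at h3
    have e1 : ∀ i : Fin m, (∑ z' : X × Y, (Pi.single z 1 : X × Y → ℝ) z' * Φ z' i) = Φ z i := by
      intro i
      simp [Pi.single_apply, ite_mul]
    have e2 : (∑ z' : X × Y, (Pi.single z 1 : X × Y → ℝ) z' * h z') = h z := by
      simp [Pi.single_apply, ite_mul]
    simp only [hL, e1, e2] at h3
    have key : (u - ∑ i, Φ z i * w i) / d < h z := by
      rw [div_lt_iff_of_neg hd0]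
      linarith
    have e3 : ∑ i, Φ z i * (α' i - β' i) + γ' = (u - ∑ i, Φ z i * w i) / d := by
      simp only [hαβ, hvv, hγ']
      rw [show (∑ i, Φ z i * (-w i / d)) = (∑ i, -(Φ z i * w i)) / d by
        rw [Finset.sum_div]
        exact Finset.sum_congr rfl fun i _ => by ring]
      rw [Finset.sum_neg_distrib]
      ring
    rw [e3]
    exact key
  have hfeas : Feas7 Φ α' β' γ' := by
    refine ⟨fun i => le_max_right _ _, fun i => le_max_right _ _, ?_⟩
    refine Finset.sup'_le _ _ fun x _ => ?_
    calc ∑ y : Y, max (∑ i, Φ (x, y) i * (α' i - β' i) + γ') 0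
        ≤ ∑ y : Y, h (x, y) :=
          Finset.sum_le_sum fun y _ => max_le (hdom (x, y)).le (hrule.1 (x, y))
      _ = 1 := hrule.2 x
  -- its objective exceeds V
  set tstar : Fin m → ℝ := fun i => if 0 ≤ vv i then a i else b i with htstar
  have htB : ((tstar, c - ε) : (Fin m → ℝ) × ℝ) ∈ B := by
    refine ⟨Set.mem_Icc.2 ⟨fun i => ?_, fun i => ?_⟩, Set.mem_Iic.2 le_rfl⟩
    · by_cases hvi : 0 ≤ vv i <;> simp [htstar, hvi, hab i]
    · by_cases hvi : 0 ≤ vv i <;> simp [htstar, hvi, hab i]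
  have h4 := hfv _ htB
  rw [hfdec] at h4
  simp only at h4
  have e4 : ∀ i, a i * α' i - b i * β' i = -(tstar i * w i) / d := by
    intro i
    by_cases hvi : 0 ≤ vv i
    · rw [hα', hβ', htstar]
      simp only
      rw [max_eq_left hvi, max_eq_right (by linarith : -vv i ≤ 0), if_pos hvi]
      simp only [hvv]
      ring
    · push_neg at hvi
      rw [hα', hβ', htstar]
      simp only
      rw [max_eq_right hvi.le, max_eq_left (by linarith : 0 ≤ -vv i), if_neg (not_le.2 hvi)]
      simp only [hvv]
      ring
  have e5 : (∑ i, a i * α' i) - (∑ i, b i * β' i) + γ'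
      = (u - ∑ i, tstar i * w i) / d := by
    rw [← Finset.sum_sub_distrib]
    rw [Finset.sum_congr rfl fun i _ => e4 i]
    rw [show (∑ i, -(tstar i * w i) / d) = (∑ i, -(tstar i * w i)) / d from
      (Finset.sum_div _ _ _).symm, Finset.sum_neg_distrib, hγ']
    ring
  have hstep : c - ε < (u - ∑ i, tstar i * w i) / d := by
    rw [lt_div_iff_of_neg hd0]
    linarith
  have hle := hopt.2 α' β' γ' hfeas
  rw [e5] at hle
  have hcε : V < c - ε := by
    rw [hε]
    linarith
  linarith

/-- the minimax expected loss equals `1 - aᵀα* + bᵀβ* - γ*` for any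
optimal solution `(α*, β*, γ*)` of problem (7). -/
theorem lpc_minimax_value {X Y : Type*} [Fintype X] [Fintype Y] [Nonempty X] [Nonempty Y]
    {m : ℕ} (Φ : X × Y → Fin m → ℝ) (a b : Fin m → ℝ) (hab : ∀ i, a i ≤ b i)
    (hU : ∃ p, InU Φ a b p)
    (α β : Fin m → ℝ) (γ : ℝ) (hopt : Opt7 Φ a b α β γ) :
    sInf {r | ∃ h : X × Y → ℝ, IsRule h ∧
        r = sSup {s | ∃ p, InU Φ a b p ∧ s = loss h p}} =
      1 - (∑ i, a i * α i) + (∑ i, b i * β i) - γ := by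
  obtain ⟨hf7, hmax⟩ := hopt
  obtain ⟨p₀, hp₀⟩ := hU
  set V : ℝ := (∑ i, a i * α i) - (∑ i, b i * β i) + γ with hV
  set S : Set ℝ := {r | ∃ h : X × Y → ℝ, IsRule h ∧
      r = sSup {s | ∃ p, InU Φ a b p ∧ s = loss h p}} with hS
  -- each inner set is bounded above by 1
  have hTbdd : ∀ h : X × Y → ℝ, IsRule h →
      BddAbove {s | ∃ p, InU Φ a b p ∧ s = loss h p} := by
    intro h hrule
    refine ⟨1, ?_⟩
    rintro s ⟨p, hpU, rfl⟩
    have h0 : 0 ≤ ∑ z : X × Y, p z * h z :=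
      Finset.sum_nonneg fun z _ => mul_nonneg (hpU.1.1 z) (hrule.1 z)
    simp only [loss]
    linarith
  -- lower bound: every element of S is at least 1 - V
  have hmem : ∀ r ∈ S, 1 - V ≤ r := by
    rintro r ⟨h, hrule, rfl⟩
    obtain ⟨p, hpU, hple⟩ := lemC Φ a b hab ⟨p₀, hp₀⟩ α β γ ⟨hf7, hmax⟩ h hrule
    have h1 : loss h p ∈ {s | ∃ p, InU Φ a b p ∧ s = loss h p} := ⟨p, hpU, rfl⟩
    have h2 : 1 - V ≤ loss h p := by
      simp only [loss]
      linarith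
    exact h2.trans (le_csSup (hTbdd h hrule) h1)
  -- upper bound witness
  obtain ⟨k, hkrule, hkdom⟩ := lemB Φ α β γ hf7
  set r₀ : ℝ := sSup {s | ∃ p, InU Φ a b p ∧ s = loss k p} with hr₀
  have hr₀S : r₀ ∈ S := ⟨k, hkrule, rfl⟩
  have hr₀le : r₀ ≤ 1 - V := by
    refine csSup_le ⟨loss k p₀, p₀, hp₀, rfl⟩ ?_
    rintro s ⟨p, hpU, rfl⟩
    have := lemA Φ a b α β γ hf7.1 hf7.2.1 p hpU k hkdom
    simp only [loss]
    linarith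
  have hbdd : BddBelow S := ⟨1 - V, fun r hr => hmem r hr⟩
  have hfinal : sInf S = 1 - V :=
    le_antisymm ((csInf_le hbdd hr₀S).trans hr₀le) (le_csInf ⟨r₀, hr₀S⟩ hmem)
  rw [hfinal, hV]
  ring
end

section
/- Let Φ : X×Y → ℝ^m be a generating function and a, b ∈ ℝ^m with a ≤ b componentwise, and assume U_Φ^{a,b} is nonempty. Then the minimax expected loss equals the maximin value: inf over classification rules h of sup over p ∈ U_Φ^{a,b} of ℓ(h,p) = 1 − inf over p ∈ U_Φ^{a,b} of Σ_{x∈X} max_{y∈Y} p(x,y). -/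
open Finset

section Aux

set_option linter.unusedSectionVars false

variable {X Y : Type*} [Fintype X] [Fintype Y] [Nonempty X] [Nonempty Y]

/-- The (∞,1)-mixed norm of `p`. -/
noncomputable def Mnorm (p : X × Y → ℝ) : ℝ :=
  ∑ x : X, Finset.univ.sup' Finset.univ_nonempty fun y : Y => p (x, y)

lemma Mnorm_nonneg {p : X × Y → ℝ} (hp : ∀ z, 0 ≤ p z) : 0 ≤ Mnorm p := by
  apply Finset.sum_nonneg
  intro x _
  obtain ⟨y⟩ := (inferInstance : Nonempty Y)
  exact le_trans (hp (x, y)) (Finset.le_sup' (fun y : Y => p (x, y)) (Finset.mem_univ y))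

lemma sum_mul_le_Mnorm {h p : X × Y → ℝ} (hh : IsRule h) (hp : ∀ z, 0 ≤ p z) :
    ∑ z : X × Y, p z * h z ≤ Mnorm p := by
  rw [Fintype.sum_prod_type, Mnorm]
  apply Finset.sum_le_sum
  intro x _
  calc ∑ y : Y, p (x, y) * h (x, y)
      ≤ ∑ y : Y, (Finset.univ.sup' Finset.univ_nonempty fun y' : Y => p (x, y')) * h (x, y) := by
        apply Finset.sum_le_sum; intro y _
        exact mul_le_mul_of_nonneg_right
          (Finset.le_sup' (fun y' : Y => p (x, y')) (Finset.mem_univ y)) (hh.1 _)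
    _ = _ := by rw [← Finset.mul_sum, hh.2 x, mul_one]

lemma exists_det_eq_Mnorm (p : X × Y → ℝ) :
    ∃ d : X → Y, ∑ x : X, p (x, d x) = Mnorm p := by
  have h : ∀ x : X, ∃ y : Y,
      (Finset.univ.sup' Finset.univ_nonempty fun y : Y => p (x, y)) = p (x, y) := by
    intro x
    obtain ⟨y, _, hy⟩ := Finset.exists_mem_eq_sup' Finset.univ_nonempty (fun y : Y => p (x, y))
    exact ⟨y, hy⟩
  choose d hd using h
  exact ⟨d, by rw [Mnorm]; exact Finset.sum_congr rfl fun x _ => (hd x).symm⟩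

lemma convex_U {m : ℕ} (Φ : X × Y → Fin m → ℝ) (a b : Fin m → ℝ) :
    Convex ℝ {p : X × Y → ℝ | InU Φ a b p} := by
  intro p hp q hq α β hα hβ hαβ
  have key : ∀ g : X × Y → ℝ,
      ∑ z : X × Y, (α • p + β • q) z * g z
        = α * ∑ z : X × Y, p z * g z + β * ∑ z : X × Y, q z * g z := by
    intro g
    rw [Finset.mul_sum, Finset.mul_sum, ← Finset.sum_add_distrib]
    apply Finset.sum_congr rfl
    intro z _
    simp only [Pi.add_apply, Pi.smul_apply, smul_eq_mul]
    ring
  refine ⟨⟨fun z => ?_, ?_⟩, fun i => ?_⟩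
  · simp only [Pi.add_apply, Pi.smul_apply, smul_eq_mul]
    exact add_nonneg (mul_nonneg hα (hp.1.1 z)) (mul_nonneg hβ (hq.1.1 z))
  · have := key 1
    simp only [Pi.one_apply, mul_one] at this
    rw [this, hp.1.2, hq.1.2]
    simpa using hαβ
  · rw [key (fun z => Φ z i)]
    have h1 : α * a i ≤ α * ∑ z : X × Y, p z * Φ z i :=
      mul_le_mul_of_nonneg_left (hp.2 i).1 hα
    have h2 : β * a i ≤ β * ∑ z : X × Y, q z * Φ z i :=
      mul_le_mul_of_nonneg_left (hq.2 i).1 hβ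
    have h3 : α * ∑ z : X × Y, p z * Φ z i ≤ α * b i :=
      mul_le_mul_of_nonneg_left (hp.2 i).2 hα
    have h4 : β * ∑ z : X × Y, q z * Φ z i ≤ β * b i :=
      mul_le_mul_of_nonneg_left (hq.2 i).2 hβ
    have ea : α * a i + β * a i = a i := by rw [← add_mul, hαβ, one_mul]
    have eb : α * b i + β * b i = b i := by rw [← add_mul, hαβ, one_mul]
    constructor <;> linarith

/-- Key separation lemma: there is a rule whose expected accuracy is at least `v`,
the lower bound on the mixed norm over the convex set `U`. -/
lemma exists_good_rule' (U : Set (X × Y → ℝ)) (hUc : Convex ℝ U) (hUne : U.Nonempty)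
    (v : ℝ) (hv : ∀ p ∈ U, v ≤ Mnorm p)
    (hdet : ∀ p ∈ U, ∃ d : X → Y, ∑ x : X, p (x, d x) = Mnorm p) :
    ∃ h : X × Y → ℝ, (∀ z, 0 ≤ h z) ∧ (∀ x : X, ∑ y : Y, h (x, y) = 1) ∧
      ∀ p ∈ U, v ≤ ∑ z : X × Y, p z * h z := by
  classical
  let φL : (X × Y → ℝ) →ₗ[ℝ] ((X → Y) → ℝ) :=
    { toFun := fun p d => ∑ x : X, p (x, d x)
      map_add' := by
        intro p q; funext d
        show ∑ x : X, (p (x, d x) + q (x, d x)) = ∑ x : X, p (x, d x) + ∑ x : X, q (x, d x)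
        exact Finset.sum_add_distrib
      map_smul' := by
        intro c p; funext d
        show ∑ x : X, c * p (x, d x) = c * ∑ x : X, p (x, d x)
        exact (Finset.mul_sum _ _ _).symm }
  let C : Set ((X → Y) → ℝ) := φL '' U
  let D : Set ((X → Y) → ℝ) := {y | ∀ d : X → Y, y d < v}
  have hDeq : D = ⋂ d : X → Y, {y : (X → Y) → ℝ | y d < v} := by
    ext y; simp [D, Set.mem_iInter]
  have hDopen : IsOpen D := by
    rw [hDeq]
    exact isOpen_iInter_of_finite fun d => by
      show IsOpen ((fun y : (X → Y) → ℝ => y d) ⁻¹' Set.Iio v)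
      exact IsOpen.preimage (continuous_apply d) isOpen_Iio
  have hDconv : Convex ℝ D := by
    rw [hDeq]
    exact convex_iInter fun d =>
      convex_halfSpace_lt (f := fun y : (X → Y) → ℝ => y d) (LinearMap.isLinear (LinearMap.proj (R := ℝ) d)) v
  have hCconv : Convex ℝ C := hUc.linear_image φL
  have hdisj : Disjoint D C := by
    rw [Set.disjoint_left]
    rintro y hyD ⟨p, hpU, rfl⟩
    obtain ⟨d, hd⟩ := hdet p hpU
    have h1 : φL p d < v := hyD d
    have h2 : φL p d = Mnorm p := hd
    have h3 := hv p hpU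
    rw [h2] at h1
    linarith
  obtain ⟨f, u, hfD, hfC⟩ := geometric_hahn_banach_open hDconv hDopen hCconv hdisj
  let lam : (X → Y) → ℝ := fun d => f (fun j => if d = j then (1 : ℝ) else 0)
  have hrep : ∀ y : (X → Y) → ℝ, f y = ∑ d : X → Y, y d * lam d := by
    intro y
    conv_lhs => rw [pi_eq_sum_univ y]
    rw [map_sum]
    apply Finset.sum_congr rfl
    intro d _
    rw [map_smul, smul_eq_mul]
  have hcD : (fun _ : X → Y => v - 1) ∈ D := fun _ => by norm_num
  have hfc : f (fun _ => v - 1) < u := hfD _ hcD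
  have hlam : ∀ d, 0 ≤ lam d := by
    intro d
    by_contra hneg
    push_neg at hneg
    have hl0 : lam d ≠ 0 := ne_of_lt hneg
    set t := (u - f (fun _ => v - 1) + 1) / (-lam d) with ht
    have ht0 : 0 < t := div_pos (by linarith) (by linarith)
    have hmem : ((fun _ => v - 1) - t • fun j => if d = j then (1 : ℝ) else 0) ∈ D := by
      intro d'
      show (v - 1) - t * (if d = d' then (1 : ℝ) else 0) < v
      by_cases hdd : d = d'
      · rw [if_pos hdd]; linarith
      · rw [if_neg hdd]; linarith
    have hlt := hfD _ hmem
    rw [map_sub, map_smul, smul_eq_mul] at hlt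
    change f (fun _ => v - 1) - t * lam d < u at hlt
    have hml : -lam d ≠ 0 := by intro h0; apply hl0; linarith
    have h1 : t * -lam d = (u - f (fun _ => v - 1) + 1) := by
      rw [ht]; exact div_mul_cancel₀ _ hml
    nlinarith [h1]
  set s := ∑ d : X → Y, lam d with hs
  have hs0 : 0 ≤ s := Finset.sum_nonneg fun d _ => hlam d
  have hspos : 0 < s := by
    rcases hs0.lt_or_eq with hlt | heq
    · exact hlt
    · exfalso
      have hall : ∀ d ∈ Finset.univ, lam d = 0 :=
        (Finset.sum_eq_zero_iff_of_nonneg (fun d _ => hlam d)).mp heq.symm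
      have hf0 : ∀ y : (X → Y) → ℝ, f y = 0 := by
        intro y
        rw [hrep y]
        exact Finset.sum_eq_zero fun d _ => by rw [hall d (Finset.mem_univ d), mul_zero]
      obtain ⟨p₀, hp₀⟩ := hUne
      have h2 : u ≤ f (φL p₀) := hfC _ ⟨p₀, hp₀, rfl⟩
      rw [hf0] at h2
      rw [hf0] at hfc
      linarith
  have hsv : s * v ≤ u := by
    by_contra hlt
    push_neg at hlt
    set ε := (s * v - u) / (2 * s) with hε
    have hε0 : 0 < ε := div_pos (by linarith) (by linarith)
    have hmem : (fun _ : X → Y => v - ε) ∈ D := fun _ => by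
      show v - ε < v; linarith
    have h1 := hfD _ hmem
    rw [hrep] at h1
    have h2 : ∑ d : X → Y, (v - ε) * lam d = (v - ε) * s := by
      rw [hs, Finset.mul_sum]
    rw [h2] at h1
    have hεs : ε * s = (s * v - u) / 2 := by
      rw [hε]; field_simp
    nlinarith
  refine ⟨fun z => (∑ d : X → Y, lam d * (if z.2 = d z.1 then 1 else 0)) / s,
    fun z => ?_, fun x => ?_, fun p hp => ?_⟩
  · apply div_nonneg _ hs0
    exact Finset.sum_nonneg fun d _ =>
      mul_nonneg (hlam d) (by positivity)
  · rw [← Finset.sum_div]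
    rw [div_eq_one_iff_eq (ne_of_gt hspos), hs]
    rw [Finset.sum_comm]
    apply Finset.sum_congr rfl
    intro d _
    rw [← Finset.mul_sum]
    simp
  · have inner : ∀ d : X → Y,
        ∑ z : X × Y, p z * (if z.2 = d z.1 then (1 : ℝ) else 0) = φL p d := by
      intro d
      show _ = ∑ x : X, p (x, d x)
      rw [Fintype.sum_prod_type]
      apply Finset.sum_congr rfl
      intro x _
      simp
    have key : ∑ z : X × Y, p z * ((∑ d : X → Y, lam d * (if z.2 = d z.1 then 1 else 0)) / s)
        = (∑ d : X → Y, φL p d * lam d) / s := by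
      simp only [← mul_div_assoc]
      rw [← Finset.sum_div]
      congr 1
      calc ∑ z : X × Y, p z * ∑ d : X → Y, lam d * (if z.2 = d z.1 then 1 else 0)
          = ∑ z : X × Y, ∑ d : X → Y, lam d * (p z * (if z.2 = d z.1 then 1 else 0)) := by
            apply Finset.sum_congr rfl
            intro z _
            rw [Finset.mul_sum]
            apply Finset.sum_congr rfl
            intro d _
            ring
        _ = ∑ d : X → Y, ∑ z : X × Y, lam d * (p z * (if z.2 = d z.1 then 1 else 0)) :=
            Finset.sum_comm
        _ = ∑ d : X → Y, φL p d * lam d := by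
            apply Finset.sum_congr rfl
            intro d _
            rw [← Finset.mul_sum, inner d]
            ring
    rw [key]
    have h2 : u ≤ f (φL p) := hfC _ ⟨p, hp, rfl⟩
    rw [hrep (φL p)] at h2
    rw [le_div_iff₀ hspos]
    have hc : v * s = s * v := mul_comm _ _
    linarith

end Aux

/-- the minimax expected loss equals the maximin value
`1 - inf_{p ∈ U} ∑_x max_y p(x,y)`. -/
theorem lpc_minimax_eq_maximin {X Y : Type*} [Fintype X] [Fintype Y] [Nonempty X] [Nonempty Y]
    {m : ℕ} (Φ : X × Y → Fin m → ℝ) (a b : Fin m → ℝ) (hab : ∀ i, a i ≤ b i)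
    (hU : ∃ p, InU Φ a b p) :
    sInf {r | ∃ h : X × Y → ℝ, IsRule h ∧
        r = sSup {s | ∃ p, InU Φ a b p ∧ s = loss h p}} =
      1 - sInf {r | ∃ p, InU Φ a b p ∧
        r = ∑ x : X, Finset.univ.sup' Finset.univ_nonempty fun y : Y => p (x, y)} := by
  classical
  obtain ⟨p₀, hp₀⟩ := hU
  show sInf {r | ∃ h : X × Y → ℝ, IsRule h ∧
        r = sSup {s | ∃ p, InU Φ a b p ∧ s = loss h p}} =
      1 - sInf {r | ∃ p, InU Φ a b p ∧ r = Mnorm p}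
  set SR : Set ℝ := {r | ∃ p, InU Φ a b p ∧ r = Mnorm p} with hSRdef
  have hSRne : SR.Nonempty := ⟨Mnorm p₀, p₀, hp₀, rfl⟩
  have hSRbd : BddBelow SR := ⟨0, by rintro r ⟨p, hp, rfl⟩; exact Mnorm_nonneg hp.1.1⟩
  set v := sInf SR with hvdef
  have hv : ∀ p, InU Φ a b p → v ≤ Mnorm p := fun p hp => csInf_le hSRbd ⟨p, hp, rfl⟩
  obtain ⟨h₀, h₀n, h₀s, h₀b⟩ := exists_good_rule' {p : X × Y → ℝ | InU Φ a b p}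
    (convex_U Φ a b) ⟨p₀, hp₀⟩ v (fun p hp => hv p hp)
    (fun p _ => exists_det_eq_Mnorm p)
  set SL : Set ℝ := {r | ∃ h : X × Y → ℝ, IsRule h ∧
      r = sSup {s | ∃ p, InU Φ a b p ∧ s = loss h p}} with hSLdef
  have hlow : ∀ r ∈ SL, 1 - v ≤ r := by
    rintro r ⟨h, hh, rfl⟩
    have hbddS : BddAbove {s | ∃ p, InU Φ a b p ∧ s = loss h p} := by
      refine ⟨1, ?_⟩
      rintro s ⟨p, hp, rfl⟩
      have hnn : 0 ≤ ∑ z : X × Y, p z * h z :=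
        Finset.sum_nonneg fun z _ => mul_nonneg (hp.1.1 z) (hh.1 z)
      simp only [loss]
      linarith
    have hkey : ∀ p, InU Φ a b p →
        1 - sSup {s | ∃ p, InU Φ a b p ∧ s = loss h p} ≤ Mnorm p := by
      intro p hp
      have h1 : loss h p ≤ sSup {s | ∃ p, InU Φ a b p ∧ s = loss h p} :=
        le_csSup hbddS ⟨p, hp, rfl⟩
      have h2 : 1 - Mnorm p ≤ loss h p := by
        have := sum_mul_le_Mnorm hh hp.1.1
        simp only [loss]
        linarith
      linarith
    have hle : 1 - sSup {s | ∃ p, InU Φ a b p ∧ s = loss h p} ≤ v := by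
      apply le_csInf hSRne
      rintro r ⟨p, hp, rfl⟩
      exact hkey p hp
    linarith
  have hSLbd : BddBelow SL := ⟨1 - v, hlow⟩
  have hmem : sSup {s | ∃ p, InU Φ a b p ∧ s = loss h₀ p} ∈ SL := ⟨h₀, ⟨h₀n, h₀s⟩, rfl⟩
  have hub : sSup {s | ∃ p, InU Φ a b p ∧ s = loss h₀ p} ≤ 1 - v := by
    have hne : {s | ∃ p, InU Φ a b p ∧ s = loss h₀ p}.Nonempty := ⟨loss h₀ p₀, p₀, hp₀, rfl⟩
    apply csSup_le hne
    rintro s ⟨p, hp, rfl⟩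
    have := h₀b p hp
    simp only [loss]
    linarith
  exact le_antisymm (le_trans (csInf_le hSLbd hmem) hub) (le_csInf ⟨_, hmem⟩ hlow)
end

section
/- Let Φ : X×Y → ℝ^m be a generating function and a, b ∈ ℝ^m with a ≤ b componentwise. Then for every probability distribution p ∈ U_Φ^{a,b} and every classification rule h: 0 ≤ 1 + κ_Φ^{a,b}(−h) ≤ ℓ(h,p) ≤ 1 − κ_Φ^{a,b}(h) ≤ 1. -/
open Finset

/-- The dual value `κ_Φ^{a,b}(q)` of Proposition 1: supremum of `aᵀα - bᵀβ + γ` over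
`α, β ≥ 0` with `Φᵀ(α-β) + γ ≤ q` pointwise. -/
noncomputable def kappa {X Y : Type*} [Fintype X] [Fintype Y] {m : ℕ}
    (Φ : X × Y → Fin m → ℝ) (a b : Fin m → ℝ) (q : X × Y → ℝ) : ℝ :=
  sSup {r | ∃ α β : Fin m → ℝ, ∃ γ : ℝ, (∀ i, 0 ≤ α i) ∧ (∀ i, 0 ≤ β i) ∧
    (∀ z : X × Y, ∑ i, Φ z i * (α i - β i) + γ ≤ q z) ∧
    r = (∑ i, a i * α i) - (∑ i, b i * β i) + γ}

lemma mem_kappa_le {X Y : Type*} [Fintype X] [Fintype Y] {m : ℕ}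
    (Φ : X × Y → Fin m → ℝ) (a b : Fin m → ℝ)
    (p : X × Y → ℝ) (hp : (∀ z, 0 ≤ p z) ∧ ∑ z : X × Y, p z = 1)
    (hmom : ∀ i, a i ≤ (∑ z : X × Y, p z * Φ z i) ∧ (∑ z : X × Y, p z * Φ z i) ≤ b i)
    (q : X × Y → ℝ)
    {r : ℝ} (hr : r ∈ {r | ∃ α β : Fin m → ℝ, ∃ γ : ℝ, (∀ i, 0 ≤ α i) ∧ (∀ i, 0 ≤ β i) ∧
      (∀ z : X × Y, ∑ i, Φ z i * (α i - β i) + γ ≤ q z) ∧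
      r = (∑ i, a i * α i) - (∑ i, b i * β i) + γ}) :
    r ≤ ∑ z : X × Y, p z * q z := by
  obtain ⟨α, β, γ, hα, hβ, hcon, rfl⟩ := hr
  obtain ⟨hp0, hp1⟩ := hp
  have step1 : ∑ z : X × Y, p z * (∑ i, Φ z i * (α i - β i) + γ) ≤ ∑ z : X × Y, p z * q z :=
    Finset.sum_le_sum fun z _ => mul_le_mul_of_nonneg_left (hcon z) (hp0 z)
  have expand : ∑ z : X × Y, p z * (∑ i, Φ z i * (α i - β i) + γ)
      = (∑ i, (α i - β i) * ∑ z : X × Y, p z * Φ z i) + γ := by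
    simp only [mul_add, Finset.sum_add_distrib, Finset.mul_sum, ← Finset.sum_mul, hp1, one_mul]
    congr 1
    rw [Finset.sum_comm]
    exact Finset.sum_congr rfl fun i _ => Finset.sum_congr rfl fun z _ => by ring
  have step2 : (∑ i, a i * α i) - (∑ i, b i * β i) + γ
      ≤ (∑ i, (α i - β i) * ∑ z : X × Y, p z * Φ z i) + γ := by
    have : ∑ i, (a i * α i - b i * β i) ≤ ∑ i, (α i - β i) * ∑ z : X × Y, p z * Φ z i := by
      refine Finset.sum_le_sum fun i _ => ?_
      obtain ⟨h1, h2⟩ := hmom i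
      nlinarith [hα i, hβ i]
    rw [Finset.sum_sub_distrib] at this
    linarith
  linarith [expand ▸ step1]

/-- performance bounds
`0 ≤ 1 + κ(−h) ≤ ℓ(h,p) ≤ 1 − κ(h) ≤ 1` for all `p ∈ U_Φ^{a,b}` and all rules `h`. -/
theorem lpc_loss_bounds {X Y : Type*} [Fintype X] [Fintype Y] [Nonempty X] [Nonempty Y]
    {m : ℕ} (Φ : X × Y → Fin m → ℝ) (a b : Fin m → ℝ) (hab : ∀ i, a i ≤ b i)
    (p : X × Y → ℝ) (hp : InU Φ a b p) (h : X × Y → ℝ) (hh : IsRule h) :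
    0 ≤ 1 + kappa Φ a b (fun z => -h z) ∧
      1 + kappa Φ a b (fun z => -h z) ≤ loss h p ∧
      loss h p ≤ 1 - kappa Φ a b h ∧
      1 - kappa Φ a b h ≤ 1 := by
  obtain ⟨hprob, hmom⟩ := hp
  obtain ⟨hh0, hhs⟩ := hh
  have hle1 : ∀ z : X × Y, h z ≤ 1 := by
    intro ⟨x, y⟩
    calc h (x, y) ≤ ∑ y' : Y, h (x, y') :=
          Finset.single_le_sum (fun y' _ => hh0 (x, y')) (Finset.mem_univ y)
      _ = 1 := hhs x
  have memh : (0 : ℝ) ∈ {r | ∃ α β : Fin m → ℝ, ∃ γ : ℝ, (∀ i, 0 ≤ α i) ∧ (∀ i, 0 ≤ β i) ∧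
      (∀ z : X × Y, ∑ i, Φ z i * (α i - β i) + γ ≤ h z) ∧
      r = (∑ i, a i * α i) - (∑ i, b i * β i) + γ} :=
    ⟨0, 0, 0, fun i => le_refl 0, fun i => le_refl 0, fun z => by simpa using hh0 z, by simp⟩
  have memnh : (-1 : ℝ) ∈ {r | ∃ α β : Fin m → ℝ, ∃ γ : ℝ, (∀ i, 0 ≤ α i) ∧ (∀ i, 0 ≤ β i) ∧
      (∀ z : X × Y, ∑ i, Φ z i * (α i - β i) + γ ≤ -h z) ∧
      r = (∑ i, a i * α i) - (∑ i, b i * β i) + γ} :=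
    ⟨0, 0, -1, fun i => le_refl 0, fun i => le_refl 0, fun z => by simpa using hle1 z, by simp⟩
  have bddh : BddAbove {r | ∃ α β : Fin m → ℝ, ∃ γ : ℝ, (∀ i, 0 ≤ α i) ∧ (∀ i, 0 ≤ β i) ∧
      (∀ z : X × Y, ∑ i, Φ z i * (α i - β i) + γ ≤ h z) ∧
      r = (∑ i, a i * α i) - (∑ i, b i * β i) + γ} :=
    ⟨∑ z : X × Y, p z * h z, fun r hr => mem_kappa_le Φ a b p hprob hmom h hr⟩
  have bddnh : BddAbove {r | ∃ α β : Fin m → ℝ, ∃ γ : ℝ, (∀ i, 0 ≤ α i) ∧ (∀ i, 0 ≤ β i) ∧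
      (∀ z : X × Y, ∑ i, Φ z i * (α i - β i) + γ ≤ -h z) ∧
      r = (∑ i, a i * α i) - (∑ i, b i * β i) + γ} :=
    ⟨∑ z : X × Y, p z * (-h z), fun r hr => mem_kappa_le Φ a b p hprob hmom (fun z => -h z) hr⟩
  have kh_le : kappa Φ a b h ≤ ∑ z : X × Y, p z * h z :=
    csSup_le ⟨0, memh⟩ fun r hr => mem_kappa_le Φ a b p hprob hmom h hr
  have knh_le : kappa Φ a b (fun z => -h z) ≤ ∑ z : X × Y, p z * (-h z) :=
    csSup_le ⟨-1, memnh⟩ fun r hr => mem_kappa_le Φ a b p hprob hmom (fun z => -h z) hr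
  have kh_ge : (0 : ℝ) ≤ kappa Φ a b h := le_csSup bddh memh
  have knh_ge : (-1 : ℝ) ≤ kappa Φ a b (fun z => -h z) := le_csSup bddnh memnh
  have hneg : ∑ z : X × Y, p z * (-h z) = -(∑ z : X × Y, p z * h z) := by
    simp [mul_neg]
  rw [hneg] at knh_le
  refine ⟨by linarith, by unfold loss; linarith, by unfold loss; linarith, by linarith⟩
end

section
/- Let Φ : X×Y → ℝ^m, λ ∈ ℝ^m, and γ ∈ ℝ satisfy max_{x∈X} Σ_{y∈Y} max(Φ(x,y)ᵀλ + γ, 0) ≤ 1. Define h(x,y) = max(Φ(x,y)ᵀλ + γ, 0) + (1 − Σ_{y'∈Y} max(Φ(x,y')ᵀλ + γ, 0))/|Y|. Then h is a classification rule (h(x,y) ≥ 0 for all (x,y) and Σ_{y∈Y} h(x,y) = 1 for every x ∈ X) and it satisfies h(x,y) ≥ Φ(x,y)ᵀλ + γ for all (x,y) ∈ X×Y. -/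
open Finset

/-- the explicit construction (9) yields a classification rule
dominating `Φ(x,y)ᵀλ + γ`. -/
theorem lpc_rule_construction {X Y : Type*} [Fintype X] [Fintype Y]
    [Nonempty X] [Nonempty Y] {m : ℕ}
    (Φ : X × Y → Fin m → ℝ) (l : Fin m → ℝ) (γ : ℝ)
    (hfeas : (Finset.univ.sup' Finset.univ_nonempty fun x : X =>
        ∑ y : Y, max (∑ i, Φ (x, y) i * l i + γ) 0) ≤ 1)
    (h : X × Y → ℝ)
    (hdef : h = fun z => max (∑ i, Φ z i * l i + γ) 0 +
      (1 - ∑ y' : Y, max (∑ i, Φ (z.1, y') i * l i + γ) 0) / (Fintype.card Y)) :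
    IsRule h ∧ ∀ z : X × Y, ∑ i, Φ z i * l i + γ ≤ h z := by
  have hcard : (0:ℝ) < Fintype.card Y := by
    exact_mod_cast Fintype.card_pos
  have hsum : ∀ x : X, (∑ y : Y, max (∑ i, Φ (x, y) i * l i + γ) 0) ≤ 1 := by
    intro x
    exact le_trans (Finset.le_sup' (f := fun x : X => ∑ y : Y, max (∑ i, Φ (x, y) i * l i + γ) 0) (Finset.mem_univ x)) hfeas
  have hnn : ∀ z : X × Y, 0 ≤ h z := by
    intro z
    rw [hdef]
    have h1 : (0:ℝ) ≤ max (∑ i, Φ z i * l i + γ) 0 := le_max_right _ _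
    have h2 : 0 ≤ (1 - ∑ y' : Y, max (∑ i, Φ (z.1, y') i * l i + γ) 0) / (Fintype.card Y) := by
      apply div_nonneg _ hcard.le
      linarith [hsum z.1]
    dsimp only
    linarith
  refine ⟨⟨hnn, ?_⟩, ?_⟩
  · intro x
    subst hdef
    simp only [Finset.sum_add_distrib, Finset.sum_const, Finset.card_univ, nsmul_eq_mul]
    field_simp
    ring
  · intro z
    rw [hdef]
    have h2 : 0 ≤ (1 - ∑ y' : Y, max (∑ i, Φ (z.1, y') i * l i + γ) 0) / (Fintype.card Y) := by
      apply div_nonneg _ hcard.le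
      linarith [hsum z.1]
    have := le_max_left (∑ i, Φ z i * l i + γ) 0
    dsimp only
    linarith
end

section
/- Let Φ : X×Y → ℝ^m be a generating function, p* a probability distribution on X×Y with τ∞ = Σ_{(x,y)} p*(x,y)·Φ(x,y), and a, b ∈ ℝ^m with a ≤ τ∞ ≤ b componentwise. Let (λ*, γ*) be an optimal solution of problem (8) for the vector τ∞. Then the minimax expected losses satisfy R_Φ^{a,b} ≤ R_Φ^{τ∞} + (τ∞ − a)ᵀ(λ*)^+ + (b − τ∞)ᵀ(−λ*)^+, where (λ*)^+ and (−λ*)^+ denote componentwise positive parts. -/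
open Finset

/-- Feasibility for problem (8). -/
def Feas8 {X Y : Type*} [Fintype X] [Fintype Y] [Nonempty X] [Nonempty Y] {m : ℕ}
    (Φ : X × Y → Fin m → ℝ) (l : Fin m → ℝ) (γ : ℝ) : Prop :=
  (Finset.univ.sup' Finset.univ_nonempty fun x : X =>
    ∑ y : Y, max (∑ i, Φ (x, y) i * l i + γ) 0) ≤ 1

/-- Optimality for problem (8) with expectation point estimate `a`. -/
def Opt8 {X Y : Type*} [Fintype X] [Fintype Y] [Nonempty X] [Nonempty Y] {m : ℕ}
    (Φ : X × Y → Fin m → ℝ) (a : Fin m → ℝ) (l : Fin m → ℝ) (γ : ℝ) : Prop :=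
  Feas8 Φ l γ ∧ ∀ l' : Fin m → ℝ, ∀ γ' : ℝ, Feas8 Φ l' γ' →
    (∑ i, a i * l' i) + γ' ≤ (∑ i, a i * l i) + γ

/-- The minimax expected loss `R_Φ^{a,b}`. -/
noncomputable def Rab {X Y : Type*} [Fintype X] [Fintype Y] {m : ℕ}
    (Φ : X × Y → Fin m → ℝ) (a b : Fin m → ℝ) : ℝ :=
  sInf {r | ∃ h : X × Y → ℝ, IsRule h ∧ r = sSup {s | ∃ p, InU Φ a b p ∧ s = loss h p}}

lemma expand_f {n : ℕ} (f : ((Fin n → ℝ) × ℝ) →L[ℝ] ℝ) (μ : Fin n → ℝ) (c : ℝ) :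
    f (μ, c) = (∑ i, μ i * f (Pi.single i 1, 0)) + c * f (0, 1) := by
  have h1 : (μ, c) = (∑ i, μ i • ((Pi.single i 1 : Fin n → ℝ), (0:ℝ))) + c • ((0 : Fin n → ℝ), (1:ℝ)) := by
    ext j
    · simp [Prod.fst_sum, Finset.sum_apply, Pi.single_apply]
    · simp [Prod.snd_sum]
  rw [h1, map_add, map_sum]
  congr 1
  · exact Finset.sum_congr rfl fun i _ => by rw [map_smul, smul_eq_mul]
  · rw [map_smul, smul_eq_mul]

lemma dual_bound {X Y : Type*} [Fintype X] [Fintype Y] [Nonempty X] [Nonempty Y] {m : ℕ}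
    (Φ : X × Y → Fin m → ℝ) (pstar : X × Y → ℝ) (hstar : IsProb pstar)
    (τ : Fin m → ℝ) (hτ : ∀ i, τ i = ∑ z : X × Y, pstar z * Φ z i)
    (l : Fin m → ℝ) (γ : ℝ) (hopt : Opt8 Φ τ l γ)
    (h : X × Y → ℝ) (hrule : IsRule h) (δ : ℝ) (hδ : 0 < δ) :
    ∃ p, InU Φ τ τ p ∧ ∑ z : X × Y, p z * h z < (∑ i, τ i * l i) + γ + δ := by
  classical
  by_contra hc
  push_neg at hc
  set v : ℝ := (∑ i, τ i * l i) + γ with hv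
  -- the linear moment map
  set T : (X × Y → ℝ) →ₗ[ℝ] (Fin m → ℝ) × ℝ :=
    { toFun := fun p => (fun i => ∑ z : X × Y, p z * Φ z i, ∑ z : X × Y, p z * h z)
      map_add' := by
        intro p q
        ext j
        · simp [add_mul, Finset.sum_add_distrib]
        · simp [add_mul, Finset.sum_add_distrib]
      map_smul' := by
        intro c p
        ext j
        · simp [Finset.mul_sum, mul_assoc]
        · simp [Finset.mul_sum, mul_assoc] } with hT
  have hTapp : ∀ p : X × Y → ℝ,
      T p = (fun i => ∑ z : X × Y, p z * Φ z i, ∑ z : X × Y, p z * h z) := fun p => rfl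
  set S : Set ((Fin m → ℝ) × ℝ) := T '' stdSimplex ℝ (X × Y) with hS
  have hSconv : Convex ℝ S := (convex_stdSimplex ℝ _).linear_image T
  have hTcont : Continuous T := by
    apply Continuous.prodMk
    · exact continuous_pi fun i => continuous_finset_sum _ fun z _ =>
        (continuous_apply z).mul continuous_const
    · exact continuous_finset_sum _ fun z _ => (continuous_apply z).mul continuous_const
  have hScl : IsClosed S := ((isCompact_stdSimplex ℝ _).image hTcont).isClosed
  have hqS : ((τ, v + δ/2) : (Fin m → ℝ) × ℝ) ∉ S := by
    rintro ⟨p, hp, hTp⟩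
    rw [hTapp] at hTp
    have hp1 : IsProb p := ⟨hp.1, hp.2⟩
    have h1 : (fun i => ∑ z : X × Y, p z * Φ z i) = τ := congrArg Prod.fst hTp
    have h2 : (∑ z : X × Y, p z * h z) = v + δ/2 := congrArg Prod.snd hTp
    have : InU Φ τ τ p := ⟨hp1, fun i => by rw [congrFun h1 i]; exact ⟨le_refl _, le_refl _⟩⟩
    have := hc p this
    linarith
  obtain ⟨f, u, hqu, hSu⟩ := geometric_hahn_banach_point_closed hSconv hScl hqS
  set s : ℝ := f (0, 1) with hsdef
  set w : ℝ := ∑ z : X × Y, pstar z * h z with hwdef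
  -- p* point in S
  have hpstarS : ((τ, w) : (Fin m → ℝ) × ℝ) ∈ S := by
    refine ⟨pstar, ⟨hstar.1, hstar.2⟩, ?_⟩
    rw [hTapp]
    have : (fun i => ∑ z : X × Y, pstar z * Φ z i) = τ := funext fun i => (hτ i).symm
    rw [this]
  have hpstarU : InU Φ τ τ pstar := ⟨hstar, fun i => ⟨(hτ i).le, (hτ i).ge⟩⟩
  have hw : v + δ ≤ w := hc pstar hpstarU
  -- sign of s
  have hspos : 0 < s := by
    have h1 := hqu.trans (hSu _ hpstarS)
    rw [expand_f f τ (v + δ/2), expand_f f τ w] at h1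
    nlinarith [h1, hw, hδ]
  -- the competing dual point
  set l' : Fin m → ℝ := fun i => -(f (Pi.single i 1, 0)) / s with hl'
  set γ' : ℝ := u / s with hγ'
  have hsum : ∀ μ : Fin m → ℝ, (∑ i, μ i * l' i) = (-(∑ i, μ i * f (Pi.single i 1, 0))) / s := by
    intro μ
    rw [eq_div_iff hspos.ne', Finset.sum_mul]
    rw [show -(∑ i, μ i * f (Pi.single i 1, 0)) = ∑ i, -(μ i * f (Pi.single i 1, 0)) by
      rw [Finset.sum_neg_distrib]]
    refine Finset.sum_congr rfl fun i _ => ?_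
    simp only [hl']
    field_simp
  have hz : ∀ z : X × Y, (∑ i, Φ z i * l' i) + γ' < h z := by
    intro z
    have hmem : ((fun i => Φ z i, h z) : (Fin m → ℝ) × ℝ) ∈ S := by
      refine ⟨Pi.single z 1, single_mem_stdSimplex ℝ z, ?_⟩
      rw [hTapp]
      have e1 : ∀ i, (∑ z' : X × Y, (Pi.single z (1:ℝ) : X × Y → ℝ) z' * Φ z' i) = Φ z i := by
        intro i; simp [Pi.single_apply, ite_mul]
      have e2 : (∑ z' : X × Y, (Pi.single z (1:ℝ) : X × Y → ℝ) z' * h z') = h z := by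
        simp [Pi.single_apply, ite_mul]
      rw [e2]
      exact congrArg (fun g => (g, h z)) (funext e1)
    have key := hSu _ hmem
    rw [expand_f f (fun i => Φ z i) (h z)] at key
    rw [hsum, hγ', ← add_div, div_lt_iff₀ hspos]
    linarith
  have hfeas : Feas8 Φ l' γ' := by
    apply Finset.sup'_le
    intro x _
    calc ∑ y : Y, max (∑ i, Φ (x, y) i * l' i + γ') 0
        ≤ ∑ y : Y, h (x, y) := by
          apply Finset.sum_le_sum
          intro y _
          exact max_le (hz (x, y)).le (hrule.1 (x, y))
      _ = 1 := hrule.2 x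
  have hval : v < (∑ i, τ i * l' i) + γ' := by
    rw [expand_f f τ (v + δ/2)] at hqu
    rw [hsum, hγ', ← add_div, lt_div_iff₀ hspos]
    nlinarith [hqu, mul_pos (half_pos hδ) hspos]
  have hle := hopt.2 l' γ' hfeas
  rw [← hv] at hle
  linarith


/-- `R_Φ^{a,b} ≤ R_Φ^{τ∞} + (τ∞ − a)ᵀ(λ*)⁺ + (b − τ∞)ᵀ(−λ*)⁺` for an
optimal solution `(λ*, γ*)` of problem (8) at `τ∞`. -/
theorem lpc_minimax_perturbation {X Y : Type*} [Fintype X] [Fintype Y]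
    [Nonempty X] [Nonempty Y] {m : ℕ}
    (Φ : X × Y → Fin m → ℝ) (pstar : X × Y → ℝ) (hstar : IsProb pstar)
    (τ : Fin m → ℝ) (hτ : ∀ i, τ i = ∑ z : X × Y, pstar z * Φ z i)
    (a b : Fin m → ℝ) (ha : ∀ i, a i ≤ τ i) (hb : ∀ i, τ i ≤ b i)
    (l : Fin m → ℝ) (γ : ℝ) (hopt : Opt8 Φ τ l γ) :
    Rab Φ a b ≤ Rab Φ τ τ + (∑ i, (τ i - a i) * max (l i) 0) +
      (∑ i, (b i - τ i) * max (-l i) 0) := by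
  classical
  obtain ⟨hfeas, hoptmax⟩ := hopt
  set v : ℝ := (∑ i, τ i * l i) + γ with hv
  set c1 : ℝ := ∑ i, (τ i - a i) * max (l i) 0 with hc1
  set c2 : ℝ := ∑ i, (b i - τ i) * max (-l i) 0 with hc2
  -- generic facts
  have hle1 : ∀ h : X × Y → ℝ, IsRule h → ∀ z, h z ≤ 1 := by
    intro h hr z
    calc h z = h (z.1, z.2) := by rw [Prod.mk.eta]
      _ ≤ ∑ y : Y, h (z.1, y) :=
        Finset.single_le_sum (fun y _ => hr.1 (z.1, y)) (Finset.mem_univ z.2)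
      _ = 1 := hr.2 z.1
  have hsum01 : ∀ h p : X × Y → ℝ, IsRule h → IsProb p →
      0 ≤ ∑ z : X × Y, p z * h z ∧ ∑ z : X × Y, p z * h z ≤ 1 := by
    intro h p hr hp
    constructor
    · exact Finset.sum_nonneg fun z _ => mul_nonneg (hp.1 z) (hr.1 z)
    · calc ∑ z : X × Y, p z * h z ≤ ∑ z : X × Y, p z * 1 :=
            Finset.sum_le_sum fun z _ => mul_le_mul_of_nonneg_left (hle1 h hr z) (hp.1 z)
        _ = 1 := by simp [hp.2]
  have hbddAbove : ∀ (a' b' : Fin m → ℝ) (h : X × Y → ℝ), IsRule h →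
      BddAbove {s | ∃ p, InU Φ a' b' p ∧ s = loss h p} := by
    intro a' b' h hr
    refine ⟨1, ?_⟩
    rintro s ⟨p, hp, rfl⟩
    have := (hsum01 h p hr hp.1).1
    simp only [loss]; linarith
  have hpsU : InU Φ τ τ pstar := ⟨hstar, fun i => ⟨(hτ i).le, (hτ i).ge⟩⟩
  have hpsUab : InU Φ a b pstar :=
    ⟨hstar, fun i => ⟨(ha i).trans (hτ i).le, (hτ i).ge.trans (hb i)⟩⟩
  -- uniform rule, for nonemptiness
  have hNpos : (0:ℝ) < (Fintype.card Y : ℝ) := by exact_mod_cast Fintype.card_pos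
  have h0rule : IsRule (fun _ : X × Y => (Fintype.card Y : ℝ)⁻¹) := by
    constructor
    · intro z; positivity
    · intro x
      have e : (Fintype.card Y : ℝ) * (Fintype.card Y : ℝ)⁻¹ = 1 := mul_inv_cancel₀ hNpos.ne'
      simp [Finset.sum_const, Finset.card_univ, nsmul_eq_mul, e]
  -- lower bound : 1 - v ≤ Rab Φ τ τ
  have hRτ : 1 - v ≤ Rab Φ τ τ := by
    unfold Rab
    refine le_csInf ⟨_, ⟨(fun _ : X × Y => (Fintype.card Y : ℝ)⁻¹), h0rule, rfl⟩⟩ ?_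
    rintro r ⟨h, hr, rfl⟩
    apply le_of_forall_pos_le_add
    intro ε hε
    obtain ⟨p, hpU, hplt⟩ := dual_bound Φ pstar hstar τ hτ l γ ⟨hfeas, hoptmax⟩ h hr ε hε
    have h1 : loss h p ≤ sSup {s | ∃ p, InU Φ τ τ p ∧ s = loss h p} :=
      le_csSup (hbddAbove τ τ h hr) ⟨p, hpU, rfl⟩
    simp only [loss] at h1 ⊢
    rw [← hv] at hplt
    linarith
  -- the rule built from (l, γ)
  set g : X × Y → ℝ := fun z => max ((∑ i, Φ z i * l i) + γ) 0 with hg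
  have hg0 : ∀ z, 0 ≤ g z := fun z => le_max_right _ _
  have hgsum : ∀ x : X, ∑ y : Y, g (x, y) ≤ 1 := by
    intro x
    exact le_trans (Finset.le_sup' (fun x : X => ∑ y : Y, max (∑ i, Φ (x, y) i * l i + γ) 0)
      (Finset.mem_univ x)) hfeas
  set H : X × Y → ℝ := fun z => g z + (1 - ∑ y : Y, g (z.1, y)) / (Fintype.card Y : ℝ) with hH
  have hHge : ∀ z, g z ≤ H z := fun z =>
    le_add_of_nonneg_right (div_nonneg (by linarith [hgsum z.1]) hNpos.le)
  have hHrule : IsRule H := by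
    constructor
    · intro z
      exact le_trans (hg0 z) (hHge z)
    · intro x
      have e : ∑ y : Y, H (x, y) = (∑ y : Y, g (x, y)) +
          (Fintype.card Y : ℝ) * ((1 - ∑ y : Y, g (x, y)) / (Fintype.card Y : ℝ)) := by
        simp [hH, Finset.sum_add_distrib, Finset.sum_const, Finset.card_univ, nsmul_eq_mul]
      rw [e, mul_div_cancel₀ _ hNpos.ne']
      ring
  -- primal bound
  have hbound : ∀ p, InU Φ a b p → loss H p ≤ 1 - v + (c1 + c2) := by
    rintro p ⟨hp, hpm⟩
    have step1 : ∑ z : X × Y, p z * ((∑ i, Φ z i * l i) + γ) ≤ ∑ z : X × Y, p z * H z := by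
      refine Finset.sum_le_sum fun z _ => ?_
      exact mul_le_mul_of_nonneg_left ((le_max_left _ _).trans (hHge z)) (hp.1 z)
    have step2 : ∑ z : X × Y, p z * ((∑ i, Φ z i * l i) + γ)
        = (∑ i, (∑ z : X × Y, p z * Φ z i) * l i) + γ := by
      have e0 : ∀ z : X × Y, p z * ((∑ i, Φ z i * l i) + γ)
          = (∑ i, (p z * Φ z i) * l i) + p z * γ := by
        intro z
        rw [mul_add, Finset.mul_sum]
        congr 1
        exact Finset.sum_congr rfl fun i _ => by ring
      rw [Finset.sum_congr rfl fun z _ => e0 z, Finset.sum_add_distrib,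
        ← Finset.sum_mul, hp.2, one_mul, Finset.sum_comm]
      congr 1
      exact Finset.sum_congr rfl fun i _ => (Finset.sum_mul _ _ _).symm
    have step3 : ∀ i : Fin m, τ i * l i - ((τ i - a i) * max (l i) 0
        + (b i - τ i) * max (-l i) 0) ≤ (∑ z : X × Y, p z * Φ z i) * l i := by
      intro i
      rcases le_or_gt 0 (l i) with hli | hli
      · rw [max_eq_left hli, max_eq_right (by linarith : -l i ≤ 0)]
        nlinarith [mul_le_mul_of_nonneg_right (hpm i).1 hli]
      · rw [max_eq_right hli.le, max_eq_left (by linarith : (0:ℝ) ≤ -l i)]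
        nlinarith [mul_le_mul_of_nonneg_right (hpm i).2 (by linarith : (0:ℝ) ≤ -l i)]
    have step4 : v - (c1 + c2) ≤ (∑ i, (∑ z : X × Y, p z * Φ z i) * l i) + γ := by
      have hs := Finset.sum_le_sum fun i (_ : i ∈ Finset.univ) => step3 i
      rw [Finset.sum_sub_distrib, Finset.sum_add_distrib] at hs
      rw [hv, hc1, hc2]
      linarith
    have step5 : (∑ i, (∑ z : X × Y, p z * Φ z i) * l i) + γ ≤ ∑ z : X × Y, p z * H z :=
      step2 ▸ step1
    simp only [loss]
    linarith
  -- conclude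
  have hmemS : sSup {s | ∃ p, InU Φ a b p ∧ s = loss H p} ∈
      {r | ∃ h : X × Y → ℝ, IsRule h ∧ r = sSup {s | ∃ p, InU Φ a b p ∧ s = loss h p}} :=
    ⟨H, hHrule, rfl⟩
  have hbddBelow : BddBelow
      {r | ∃ h : X × Y → ℝ, IsRule h ∧ r = sSup {s | ∃ p, InU Φ a b p ∧ s = loss h p}} := by
    refine ⟨0, ?_⟩
    rintro r ⟨h, hr, rfl⟩
    refine le_csSup_of_le (hbddAbove a b h hr) ⟨pstar, hpsUab, rfl⟩ ?_
    have := (hsum01 h pstar hr hstar).2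
    simp only [loss]; linarith
  have h6 : Rab Φ a b ≤ sSup {s | ∃ p, InU Φ a b p ∧ s = loss H p} :=
    csInf_le hbddBelow hmemS
  have h7 : sSup {s | ∃ p, InU Φ a b p ∧ s = loss H p} ≤ 1 - v + (c1 + c2) := by
    refine csSup_le ⟨loss H pstar, ⟨pstar, hpsUab, rfl⟩⟩ ?_
    rintro s ⟨p, hp, rfl⟩
    exact hbound p hp
  linarith
end

section
/- Let Φ : X×Y → ℝ^m be a generating function, τ ∈ ℝ^m, d ∈ ℝ^m with d ≥ 0 componentwise, and p* a probability distribution with p* ∈ U_Φ^{τ−d, τ+d}. Let λ ∈ ℝ^m, γ ∈ ℝ, and let h be a classification rule satisfying h(x,y) ≥ Φ(x,y)ᵀλ + γ for all (x,y) ∈ X×Y. Then ℓ(h, p*) ≤ 1 − τᵀλ − γ + Σ_{i=1}^m d_i·|λ_i|. -/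
open Finset

/-- upper bound on the risk of a rule dominating `Φᵀλ + γ` when the true
distribution lies in `U_Φ^{τ−d, τ+d}`. -/
theorem lpc_risk_upper_bound {X Y : Type*} [Fintype X] [Fintype Y]
    [Nonempty X] [Nonempty Y] {m : ℕ}
    (Φ : X × Y → Fin m → ℝ) (τ d : Fin m → ℝ) (hd : ∀ i, 0 ≤ d i)
    (pstar : X × Y → ℝ) (hstar : InU Φ (fun i => τ i - d i) (fun i => τ i + d i) pstar)
    (l : Fin m → ℝ) (γ : ℝ) (h : X × Y → ℝ) (hrule : IsRule h)
    (hge : ∀ z : X × Y, ∑ i, Φ z i * l i + γ ≤ h z) :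
    loss h pstar ≤ 1 - (∑ i, τ i * l i) - γ + ∑ i, d i * |l i| := by

  obtain ⟨⟨hp0, hp1⟩, hpi⟩ := hstar
  have key : ∀ i, τ i * l i - d i * |l i| ≤ (∑ z : X × Y, pstar z * Φ z i) * l i := by
    intro i
    set s := ∑ z : X × Y, pstar z * Φ z i with hs
    have ha : τ i - d i ≤ s := (hpi i).1
    have hb : s ≤ τ i + d i := (hpi i).2
    have h1 : |s - τ i| ≤ d i := by
      rw [abs_le]; constructor <;> linarith
    have h2 : -(d i * |l i|) ≤ (s - τ i) * l i := by
      have := abs_mul (s - τ i) (l i) ▸ neg_abs_le ((s - τ i) * l i)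
      have h3 : |s - τ i| * |l i| ≤ d i * |l i| :=
        mul_le_mul_of_nonneg_right h1 (abs_nonneg _)
      nlinarith [neg_abs_le ((s - τ i) * l i), abs_mul (s - τ i) (l i)]
    nlinarith
  have step : (∑ i, τ i * l i) + γ - ∑ i, d i * |l i| ≤ ∑ z : X × Y, pstar z * h z := by
    have hlow : ∀ z : X × Y, pstar z * (∑ i, Φ z i * l i + γ) ≤ pstar z * h z :=
      fun z => mul_le_mul_of_nonneg_left (hge z) (hp0 z)
    calc (∑ i, τ i * l i) + γ - ∑ i, d i * |l i|
        = ∑ i, (τ i * l i - d i * |l i|) + γ := by rw [Finset.sum_sub_distrib]; ring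
      _ ≤ ∑ i, (∑ z : X × Y, pstar z * Φ z i) * l i + γ := by
          gcongr with i _; exact key i
      _ = ∑ z : X × Y, pstar z * (∑ i, Φ z i * l i + γ) := by
          simp only [mul_add, Finset.sum_add_distrib, ← Finset.sum_mul, hp1, one_mul]
          congr 1
          simp only [Finset.sum_mul, Finset.mul_sum]
          rw [Finset.sum_comm]
          exact Finset.sum_congr rfl fun z _ => Finset.sum_congr rfl fun i _ => by ring
      _ ≤ ∑ z : X × Y, pstar z * h z := Finset.sum_le_sum fun z _ => hlow z
  unfold loss
  linarith
end

section
/- Let Φ : X×Y → ℝ^m be a generating function, τ ∈ ℝ^m, d ∈ ℝ^m with d ≥ 0 componentwise, and p* a probability distribution with p* ∈ U_Φ^{τ−d, τ+d}. Let λ ∈ ℝ^m, γ ∈ ℝ, and let h be a classification rule satisfying Φ(x,y)ᵀλ + γ ≤ −h(x,y) for all (x,y) ∈ X×Y. Then ℓ(h, p*) ≥ 1 + τᵀλ + γ − Σ_{i=1}^m d_i·|λ_i|. -/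
open Finset

/-- lower bound on the risk of a rule `h` with `Φᵀλ + γ ≤ −h` when the true
distribution lies in `U_Φ^{τ−d, τ+d}`. -/
theorem lpc_risk_lower_bound {X Y : Type*} [Fintype X] [Fintype Y]
    [Nonempty X] [Nonempty Y] {m : ℕ}
    (Φ : X × Y → Fin m → ℝ) (τ d : Fin m → ℝ) (hd : ∀ i, 0 ≤ d i)
    (pstar : X × Y → ℝ) (hstar : InU Φ (fun i => τ i - d i) (fun i => τ i + d i) pstar)
    (l : Fin m → ℝ) (γ : ℝ) (h : X × Y → ℝ) (hrule : IsRule h)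
    (hle : ∀ z : X × Y, ∑ i, Φ z i * l i + γ ≤ -h z) :
    1 + (∑ i, τ i * l i) + γ - (∑ i, d i * |l i|) ≤ loss h pstar := by
  obtain ⟨⟨hp, hsum⟩, hU⟩ := hstar
  unfold loss
  -- step 1: ∑ p h ≤ ∑ p * (-(Φ·l) - γ)
  have step1 : ∑ z : X × Y, pstar z * h z
      ≤ ∑ z : X × Y, pstar z * (-(∑ i, Φ z i * l i) - γ) := by
    apply Finset.sum_le_sum
    intro z _
    have := hle z
    nlinarith [hp z]
  -- rewrite the RHS
  have step2 : ∑ z : X × Y, pstar z * (-(∑ i, Φ z i * l i) - γ)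
      = -(∑ i, (∑ z : X × Y, pstar z * Φ z i) * l i) - γ := by
    calc ∑ z : X × Y, pstar z * (-(∑ i, Φ z i * l i) - γ)
        = ∑ z : X × Y, (-(∑ i, pstar z * Φ z i * l i) - pstar z * γ) := by
          apply Finset.sum_congr rfl; intro z _
          rw [mul_sub, mul_neg, Finset.mul_sum]
          simp only [mul_assoc]
      _ = -(∑ z : X × Y, ∑ i, pstar z * Φ z i * l i) - (∑ z : X × Y, pstar z) * γ := by
          rw [Finset.sum_sub_distrib, Finset.sum_neg_distrib, Finset.sum_mul]
      _ = -(∑ i, (∑ z : X × Y, pstar z * Φ z i) * l i) - γ := by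
          rw [hsum, one_mul, Finset.sum_comm]
          congr 1; congr 1; apply Finset.sum_congr rfl; intro i _
          rw [Finset.sum_mul]
  have step3 : ∀ i, -((∑ z : X × Y, pstar z * Φ z i) * l i)
      ≤ -(τ i * l i) + d i * |l i| := by
    intro i
    obtain ⟨h1, h2⟩ := hU i
    have h1' : τ i - d i ≤ ∑ z : X × Y, pstar z * Φ z i := h1
    have h2' : ∑ z : X × Y, pstar z * Φ z i ≤ τ i + d i := h2
    rcases le_or_gt 0 (l i) with hl | hl
    · have : |l i| = l i := abs_of_nonneg hl
      rw [this]; nlinarith [h1', h2']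
    · have : |l i| = -l i := abs_of_neg hl
      rw [this]; nlinarith [h1', h2']
  have step4 : -(∑ i, (∑ z : X × Y, pstar z * Φ z i) * l i)
      ≤ ∑ i, (-(τ i * l i) + d i * |l i|) := by
    rw [← Finset.sum_neg_distrib]
    exact Finset.sum_le_sum fun i _ => step3 i
  rw [Finset.sum_add_distrib, Finset.sum_neg_distrib] at step4
  linarith [step1, step2.le, step2.ge]
end

section
/- Let Φ : X×Y → ℝ^m be a generating function, p* a probability distribution on X×Y with τ∞ = Σ_{(x,y)} p*(x,y)·Φ(x,y), and τ' ∈ ℝ^m. Let (λ*, γ*) be an optimal solution of problem (8) for the vector τ∞, let (λ', γ') be an optimal solution of problem (8) for the vector τ', and let h' be a classification rule satisfying h'(x,y) ≥ Φ(x,y)ᵀλ' + γ' for all (x,y) ∈ X×Y. Then ℓ(h', p*) ≤ (1 − τ∞ᵀλ* − γ*) + (τ' − τ∞)ᵀ(λ' − λ*), and consequently ℓ(h', p*) ≤ (1 − τ∞ᵀλ* − γ*) + ‖τ' − τ∞‖₂·‖λ' − λ*‖₂. -/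
open Finset

/-- excess-risk bound for the LPC built from the solution of (8) at an
estimate `τ'`, relative to the optimal dual value at the true expectation `τ∞`. -/
theorem lpc_excess_risk {X Y : Type*} [Fintype X] [Fintype Y]
    [Nonempty X] [Nonempty Y] {m : ℕ}
    (Φ : X × Y → Fin m → ℝ) (pstar : X × Y → ℝ) (hstar : IsProb pstar)
    (τ : Fin m → ℝ) (hτ : ∀ i, τ i = ∑ z : X × Y, pstar z * Φ z i)
    (τ' : Fin m → ℝ)
    (l : Fin m → ℝ) (γ : ℝ) (hopt : Opt8 Φ τ l γ)
    (l' : Fin m → ℝ) (γ' : ℝ) (hopt' : Opt8 Φ τ' l' γ')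
    (h' : X × Y → ℝ) (hrule : IsRule h')
    (hge : ∀ z : X × Y, ∑ i, Φ z i * l' i + γ' ≤ h' z) :
    loss h' pstar ≤ (1 - (∑ i, τ i * l i) - γ) + ∑ i, (τ' i - τ i) * (l' i - l i) ∧
      loss h' pstar ≤ (1 - (∑ i, τ i * l i) - γ) +
        Real.sqrt (∑ i, (τ' i - τ i) ^ 2) * Real.sqrt (∑ i, (l' i - l i) ^ 2) := by
  have key : ∀ (v : Fin m → ℝ) (c : ℝ),
      ∑ z : X × Y, pstar z * (∑ i, Φ z i * v i + c) = (∑ i, τ i * v i) + c := by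
    intro v c
    have h1 : ∑ z : X × Y, pstar z * (∑ i, Φ z i * v i + c)
        = (∑ z : X × Y, ∑ i, pstar z * Φ z i * v i) + (∑ z : X × Y, pstar z * c) := by
      rw [← Finset.sum_add_distrib]
      congr 1; ext z
      rw [mul_add, Finset.mul_sum]
      ring_nf
    rw [h1, Finset.sum_comm, ← Finset.sum_mul, hstar.2, one_mul]
    congr 1
    refine Finset.sum_congr rfl fun i _ => ?_
    rw [hτ, Finset.sum_mul]
  have step1 : (∑ i, τ i * l' i) + γ' ≤ ∑ z : X × Y, pstar z * h' z := by
    rw [← key l' γ']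
    exact Finset.sum_le_sum fun z _ =>
      mul_le_mul_of_nonneg_left (hge z) (hstar.1 z)
  have step2 : (∑ i, τ' i * l i) + γ ≤ (∑ i, τ' i * l' i) + γ' :=
    hopt'.2 l γ hopt.1
  have expand : ∑ i, (τ' i - τ i) * (l' i - l i)
      = (∑ i, τ' i * l' i) - (∑ i, τ' i * l i) - (∑ i, τ i * l' i) + (∑ i, τ i * l i) := by
    rw [← Finset.sum_sub_distrib, ← Finset.sum_sub_distrib, ← Finset.sum_add_distrib]
    refine Finset.sum_congr rfl fun i _ => ?_; ring
  have first : loss h' pstar ≤ (1 - (∑ i, τ i * l i) - γ) + ∑ i, (τ' i - τ i) * (l' i - l i) := by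
    rw [loss, expand]; linarith
  refine ⟨first, first.trans ?_⟩
  have cs := Finset.sum_mul_sq_le_sq_mul_sq Finset.univ (fun i => τ' i - τ i) (fun i => l' i - l i)
  have h2 : ∑ i, (τ' i - τ i) * (l' i - l i)
      ≤ Real.sqrt (∑ i, (τ' i - τ i) ^ 2) * Real.sqrt (∑ i, (l' i - l i) ^ 2) := by
    have hnn : (0:ℝ) ≤ (∑ i, (τ' i - τ i) ^ 2) * (∑ i, (l' i - l i) ^ 2) :=
      mul_nonneg (Finset.sum_nonneg fun i _ => sq_nonneg _)
        (Finset.sum_nonneg fun i _ => sq_nonneg _)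
    calc ∑ i, (τ' i - τ i) * (l' i - l i)
        ≤ Real.sqrt ((∑ i, (τ' i - τ i) ^ 2) * (∑ i, (l' i - l i) ^ 2)) := by
          refine (le_abs_self _).trans ?_
          rw [← Real.sqrt_sq_eq_abs]
          exact Real.sqrt_le_sqrt cs
      _ = Real.sqrt (∑ i, (τ' i - τ i) ^ 2) * Real.sqrt (∑ i, (l' i - l i) ^ 2) :=
          Real.sqrt_mul (Finset.sum_nonneg fun i _ => sq_nonneg _) _
  linarith
end
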